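/- arXiv:1306.1885 — 3 statements merged into one kernel-verified Lean document; each statement's English description precedes it below -/
import Mathlib

section
/- Let d ≥ 1, let B ≠ 0 be a symmetric nonnegative-definite d×d real matrix, and let μ be a probability measure on ℝ^d. Suppose there exist constants a_n ∈ (0,∞) and vectors ξ_n ∈ ℝ^d such that the pushforward of the n-fold convolution power μ^{*n} under the map x ↦ a_n·x − ξ_n converges weakly to N(0,B) as n → ∞. Then the norming sequence (a_n) is regularly varying at ∞ with index −1/2, that is, for every λ > 0, a_{⌊λn⌋}/a_n → λ^{−1/2} as n → ∞. -/
open MeasureTheory Filter Topology Matrix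

noncomputable section

abbrev Ed (d : ℕ) := EuclideanSpace ℝ (Fin d)

/-- Characteristic function of a measure on `ℝ^d`. -/
def charFn {d : ℕ} (ν : Measure (Ed d)) (z : Ed d) : ℂ :=
  ∫ x, Complex.exp (((inner ℝ z x : ℝ) : ℂ) * Complex.I) ∂ν

/-- `ν` is the centered Gaussian `N(0,B)`: a probability measure whose characteristic
function is `z ↦ exp(-⟨z, Bz⟩/2)`. -/
def IsGaussianN {d : ℕ} (B : Matrix (Fin d) (Fin d) ℝ) (ν : Measure (Ed d)) : Prop :=
  IsProbabilityMeasure ν ∧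
    ∀ z : Ed d, charFn ν z =
      Complex.exp (-(((∑ i, ∑ j, z i * B i j * z j : ℝ) : ℂ)) / 2)

/-- Weak convergence of measures along a filter. -/
def WeakTendsto {d : ℕ} {ι : Type*} (l : Filter ι) (μs : ι → Measure (Ed d))
    (ν : Measure (Ed d)) : Prop :=
  ∀ g : BoundedContinuousFunction (Ed d) ℝ,
    Tendsto (fun i => ∫ x, g x ∂(μs i)) l (𝓝 (∫ x, g x ∂ν))

/-- `n`-fold convolution power of `μ`. -/
def convPow {d : ℕ} (μ : Measure (Ed d)) (n : ℕ) : Measure (Ed d) :=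
  (Measure.pi (fun _ : Fin n => μ)).map (fun x => ∑ i, x i)

/-- Regular variation of `f` with index `ρ` along the filter `l`
(`l = atTop` for regular variation at `∞`, `l = 𝓝[>] 0` for regular variation at `0`). -/
def RegVar (l : Filter ℝ) (f : ℝ → ℝ) (ρ : ℝ) : Prop :=
  ∀ t > 0, Tendsto (fun x => f (t * x) / f x) l (𝓝 (t ^ ρ))

/-- Matrix regular variation with index `ρ` and limiting matrix `B` along `l`. -/
def MRV {d : ℕ} (l : Filter ℝ) (A : ℝ → Matrix (Fin d) (Fin d) ℝ) (ρ : ℝ)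
    (B : Matrix (Fin d) (Fin d) ℝ) : Prop :=
  (∀ t > 0, 0 < (A t).trace) ∧ RegVar l (fun t => (A t).trace) ρ ∧
    Tendsto (fun t => ((A t).trace)⁻¹ • A t) l (𝓝 B)

/-- `M` is a Lévy measure: it has no atom at `0` and integrates `|x|² ∧ 1`. -/
def IsLevyMeasure {d : ℕ} (M : Measure (Ed d)) : Prop :=
  M {0} = 0 ∧ (∫⁻ x, ENNReal.ofReal (min (‖x‖ ^ 2) 1) ∂M) < ⊤

/-- The cumulant generating function of `ID(0,M,b)`. -/
def levyCGF {d : ℕ} (M : Measure (Ed d)) (b : Ed d) (z : Ed d) : ℂ :=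
  Complex.I * ((inner ℝ b z : ℝ) : ℂ) +
    ∫ x, (Complex.exp (((inner ℝ z x : ℝ) : ℂ) * Complex.I) - 1 -
      Complex.I * ((inner ℝ z x : ℝ) : ℂ) / ((1 + ‖x‖ ^ 2 : ℝ) : ℂ)) ∂M

lemma integrable_exp_char {d : ℕ} (ρ : Measure (Ed d)) [IsFiniteMeasure ρ] (w : Ed d) :
    Integrable (fun x : Ed d => Complex.exp (((inner ℝ w x : ℝ) : ℂ) * Complex.I)) ρ := by
  have hc : Continuous fun x : Ed d => Complex.exp (((inner ℝ w x : ℝ) : ℂ) * Complex.I) := by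
    exact Complex.continuous_exp.comp ((Complex.continuous_ofReal.comp
      (continuous_const.inner continuous_id)).mul continuous_const)
  refine (integrable_const (1:ℝ)).mono' hc.aestronglyMeasurable ?_
  filter_upwards with x
  rw [Complex.norm_exp_ofReal_mul_I]

lemma charFn_convPow {d : ℕ} (μ : Measure (Ed d)) [IsProbabilityMeasure μ] (n : ℕ) (z : Ed d) :
    charFn (convPow μ n) z = (charFn μ z) ^ n := by
  letI : MeasureSpace (Ed d) := ⟨μ⟩
  have hmeas : Measurable fun x : Fin n → Ed d => ∑ i, x i :=
    Finset.measurable_sum _ (fun i _ => measurable_pi_apply i)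
  rw [charFn, convPow, integral_map hmeas.aemeasurable]
  · have : ∀ x : Fin n → Ed d, Complex.exp (((inner ℝ z (∑ i, x i) : ℝ) : ℂ) * Complex.I)
        = ∏ i, Complex.exp (((inner ℝ z (x i) : ℝ) : ℂ) * Complex.I) := by
      intro x
      rw [inner_sum, Complex.ofReal_sum, Finset.sum_mul, Complex.exp_sum]
    simp_rw [this]
    have := MeasureTheory.integral_fintype_prod_eq_pow (𝕜 := ℂ) (ι := Fin n) (μ := μ)
      (fun y : Ed d => Complex.exp (((inner ℝ z y : ℝ) : ℂ) * Complex.I))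
    simpa [charFn] using this
  · exact (Complex.continuous_exp.comp ((Complex.continuous_ofReal.comp
      (continuous_const.inner continuous_id)).mul continuous_const)).aestronglyMeasurable

lemma charFn_map_affine {d : ℕ} (ρ : Measure (Ed d)) [IsProbabilityMeasure ρ]
    (a : ℝ) (ξ : Ed d) (z : Ed d) :
    charFn (ρ.map (fun x => a • x - ξ)) z
      = Complex.exp (-(((inner ℝ z ξ : ℝ) : ℂ)) * Complex.I) * charFn ρ (a • z) := by
  have hmeas : Measurable fun x : Ed d => a • x - ξ :=
    ((continuous_id.const_smul a).sub continuous_const).measurable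
  rw [charFn, integral_map hmeas.aemeasurable]
  · have : ∀ x : Ed d, Complex.exp (((inner ℝ z (a • x - ξ) : ℝ) : ℂ) * Complex.I)
        = Complex.exp (-(((inner ℝ z ξ : ℝ) : ℂ)) * Complex.I)
          * Complex.exp (((inner ℝ (a • z) x : ℝ) : ℂ) * Complex.I) := by
      intro x
      rw [← Complex.exp_add]
      congr 1
      have h1 : (inner ℝ z (a • x - ξ) : ℝ) = a * (inner ℝ z x : ℝ) - (inner ℝ z ξ : ℝ) := by
        rw [inner_sub_right, real_inner_smul_right]
      have h2 : (inner ℝ (a • z) x : ℝ) = a * (inner ℝ z x : ℝ) := real_inner_smul_left z x a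
      rw [h1, h2]
      push_cast
      ring
    simp_rw [this]
    rw [integral_const_mul, charFn]
  · exact (Complex.continuous_exp.comp ((Complex.continuous_ofReal.comp
      (continuous_const.inner continuous_id)).mul continuous_const)).aestronglyMeasurable

lemma norm_charFn_map {d : ℕ} (μ : Measure (Ed d)) [IsProbabilityMeasure μ]
    (m : ℕ) (am : ℝ) (ξ : Ed d) (t : ℝ) (z₀ : Ed d) :
    ‖charFn ((convPow μ m).map (fun x => am • x - ξ)) (t • z₀)‖
      = ‖charFn μ ((am * t) • z₀)‖ ^ m := by
  haveI : IsProbabilityMeasure (convPow μ m) := by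
    refine Measure.isProbabilityMeasure_map ?_
    exact (Finset.measurable_sum _ (fun i _ => measurable_pi_apply i)).aemeasurable
  rw [charFn_map_affine, norm_mul]
  have : ‖Complex.exp (-(((inner ℝ (t • z₀) ξ : ℝ) : ℂ)) * Complex.I)‖ = 1 := by
    rw [show (-(((inner ℝ (t • z₀) ξ : ℝ) : ℂ)) : ℂ) = (((-(inner ℝ (t • z₀) ξ : ℝ) : ℝ)) : ℂ) by push_cast; ring]
    exact Complex.norm_exp_ofReal_mul_I _
  rw [this, one_mul, charFn_convPow, norm_pow]
  congr 2
  rw [smul_smul]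

def cosB {d : ℕ} (w : Ed d) : BoundedContinuousFunction (Ed d) ℝ :=
  BoundedContinuousFunction.ofNormedAddCommGroup (fun x => Real.cos (inner ℝ w x))
    (Real.continuous_cos.comp (continuous_const.inner continuous_id)) 1
    (fun x => by simpa using Real.abs_cos_le_one _)

def sinB {d : ℕ} (w : Ed d) : BoundedContinuousFunction (Ed d) ℝ :=
  BoundedContinuousFunction.ofNormedAddCommGroup (fun x => Real.sin (inner ℝ w x))
    (Real.continuous_sin.comp (continuous_const.inner continuous_id)) 1
    (fun x => by simpa using Real.abs_sin_le_one _)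

lemma charFn_eq_cos_sin {d : ℕ} (ρ : Measure (Ed d)) [IsProbabilityMeasure ρ] (w : Ed d) :
    charFn ρ w = ((∫ x, cosB w x ∂ρ : ℝ) : ℂ) + ((∫ x, sinB w x ∂ρ : ℝ) : ℂ) * Complex.I := by
  have h1 : ∀ x : Ed d, Complex.exp (((inner ℝ w x : ℝ) : ℂ) * Complex.I)
      = ((Real.cos (inner ℝ w x) : ℝ) : ℂ) + ((Real.sin (inner ℝ w x) : ℝ) : ℂ) * Complex.I := by
    intro x
    rw [Complex.exp_mul_I, Complex.ofReal_cos, Complex.ofReal_sin]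
  rw [charFn]
  simp_rw [h1]
  have hcos : Integrable (fun x : Ed d => ((Real.cos (inner ℝ w x) : ℝ) : ℂ)) ρ :=
    ((cosB w).integrable ρ).ofReal
  have hsin : Integrable (fun x : Ed d => ((Real.sin (inner ℝ w x) : ℝ) : ℂ)) ρ :=
    ((sinB w).integrable ρ).ofReal
  rw [integral_add hcos (hsin.mul_const _), integral_mul_const]
  have h2 : ∫ x, ((Real.cos (inner ℝ w x) : ℝ) : ℂ) ∂ρ = ((∫ x, Real.cos (inner ℝ w x) ∂ρ : ℝ) : ℂ) :=
    integral_ofReal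
  have h3 : ∫ x, ((Real.sin (inner ℝ w x) : ℝ) : ℂ) ∂ρ = ((∫ x, Real.sin (inner ℝ w x) ∂ρ : ℝ) : ℂ) :=
    integral_ofReal
  rw [h2, h3]
  rfl

lemma norm_exp_sub_exp_le (α β : ℝ) :
    ‖Complex.exp ((α:ℂ)*Complex.I) - Complex.exp ((β:ℂ)*Complex.I)‖ ≤ min 2 (2*|α-β|) := by
  have key : Complex.exp ((α:ℂ)*Complex.I) - Complex.exp ((β:ℂ)*Complex.I)
      = Complex.exp ((β:ℂ)*Complex.I) * (Complex.exp (((α-β:ℝ):ℂ)*Complex.I) - 1) := by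
    rw [mul_sub, ← Complex.exp_add, mul_one]; congr 1; push_cast; ring
  rw [key, norm_mul, Complex.norm_exp_ofReal_mul_I, one_mul]
  have habs : ‖((α-β:ℝ):ℂ)*Complex.I‖ = |α - β| := by
    rw [norm_mul, Complex.norm_I, Complex.norm_real, Real.norm_eq_abs, mul_one]
  have b2 : ‖Complex.exp (((α-β:ℝ):ℂ)*Complex.I) - 1‖ ≤ 2 := by
    calc ‖Complex.exp (((α-β:ℝ):ℂ)*Complex.I) - 1‖
        ≤ ‖Complex.exp (((α-β:ℝ):ℂ)*Complex.I)‖ + ‖(1:ℂ)‖ := norm_sub_le _ _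
      _ = 2 := by rw [Complex.norm_exp_ofReal_mul_I, norm_one]; norm_num
  refine le_min b2 ?_
  rcases le_or_gt (|α - β|) 1 with h | h
  · have := Complex.norm_exp_sub_one_le (x := ((α-β:ℝ):ℂ)*Complex.I) (by rw [habs]; exact h)
    rw [habs] at this
    simpa using this
  · linarith

def cutB (d : ℕ) (K : ℕ) : BoundedContinuousFunction (Ed d) ℝ :=
  BoundedContinuousFunction.ofNormedAddCommGroup (fun x => min 2 ((2/((K:ℝ)+1)) * ‖x‖))
    (continuous_const.min (continuous_const.mul continuous_norm)) 2
    (fun x => by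
      rw [Real.norm_eq_abs, abs_le]
      refine ⟨?_, min_le_left _ _⟩
      have : (0:ℝ) ≤ min 2 ((2/((K:ℝ)+1)) * ‖x‖) :=
        le_min (by norm_num) (mul_nonneg (by positivity) (norm_nonneg x))
      linarith)

lemma cutB_apply {d : ℕ} (K : ℕ) (x : Ed d) : cutB d K x = min 2 ((2/((K:ℝ)+1)) * ‖x‖) := rfl

lemma cutB_nonneg {d : ℕ} (K : ℕ) (x : Ed d) : 0 ≤ cutB d K x :=
  le_min (by norm_num) (mul_nonneg (by positivity) (norm_nonneg x))

lemma cutB_tendsto {d : ℕ} (ν : Measure (Ed d)) [IsProbabilityMeasure ν] :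
    Tendsto (fun K : ℕ => ∫ x, cutB d K x ∂ν) atTop (𝓝 0) := by
  have := MeasureTheory.tendsto_integral_of_dominated_convergence
    (F := fun K : ℕ => fun x : Ed d => cutB d K x) (f := fun _ : Ed d => (0:ℝ))
    (bound := fun _ : Ed d => 2) (μ := ν)
    (fun K => ((cutB d K).continuous).aestronglyMeasurable)
    (integrable_const 2)
    (fun K => by
      filter_upwards with x
      rw [Real.norm_eq_abs, abs_le]
      exact ⟨by linarith [cutB_nonneg K x], min_le_left _ _⟩)
    (by
      filter_upwards with x
      have h1 : Tendsto (fun K : ℕ => (2/((K:ℝ)+1)) * ‖x‖) atTop (𝓝 0) := by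
        have h2 : Tendsto (fun K : ℕ => 2/((K:ℝ)+1)) atTop (𝓝 0) := by
          simpa [div_eq_mul_inv] using (tendsto_one_div_add_atTop_nhds_zero_nat (𝕜 := ℝ)).const_mul 2
        simpa using h2.mul_const ‖x‖
      have h3 : Tendsto (fun K : ℕ => cutB d K x) atTop (𝓝 (min 2 0)) :=
        tendsto_const_nhds.min h1
      simpa using h3)
  simpa using this

lemma charFn_fixed_tendsto {d : ℕ} (ρs : ℕ → Measure (Ed d))
    (hp : ∀ n, IsProbabilityMeasure (ρs n)) (ν : Measure (Ed d)) [IsProbabilityMeasure ν]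
    (hw : WeakTendsto atTop ρs ν) (w : Ed d) :
    Tendsto (fun n => charFn (ρs n) w) atTop (𝓝 (charFn ν w)) := by
  have heq : (fun n => charFn (ρs n) w)
      = fun n => ((∫ x, cosB w x ∂(ρs n) : ℝ) : ℂ) + ((∫ x, sinB w x ∂(ρs n) : ℝ) : ℂ) * Complex.I := by
    funext n
    haveI := hp n
    exact charFn_eq_cos_sin (ρs n) w
  rw [heq, charFn_eq_cos_sin ν w]
  exact ((Complex.continuous_ofReal.tendsto _).comp (hw (cosB w))).add
    (((Complex.continuous_ofReal.tendsto _).comp (hw (sinB w))).mul_const _)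

lemma charFn_tendsto_of_weak {d : ℕ} (ρs : ℕ → Measure (Ed d))
    (hp : ∀ n, IsProbabilityMeasure (ρs n)) (ν : Measure (Ed d)) [IsProbabilityMeasure ν]
    (hw : WeakTendsto atTop ρs ν) (r : ℕ → ℝ) (c : ℝ) (hr : Tendsto r atTop (𝓝 c)) (z : Ed d) :
    Tendsto (fun n => charFn (ρs n) (r n • z)) atTop (𝓝 (charFn ν (c • z))) := by
  have hdiff : Tendsto (fun n => charFn (ρs n) (r n • z) - charFn (ρs n) (c • z)) atTop (𝓝 0) := by
    rw [NormedAddCommGroup.tendsto_nhds_zero]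
    intro ε hε
    -- choose K
    obtain ⟨K, hK⟩ : ∃ K : ℕ, ∫ x, cutB d K x ∂ν < ε/4 := by
      have := (cutB_tendsto ν).eventually_lt_const (by positivity : (0:ℝ) < ε/4)
      exact this.exists
    set D : ℝ := 2*‖z‖+1 with hD
    have hD0 : 0 < D := by positivity
    have h2 : ∀ᶠ n in atTop, D * |r n - c| * ((K:ℝ)+1) < ε/2 := by
      have ht : Tendsto (fun n => D * |r n - c| * ((K:ℝ)+1)) atTop (𝓝 0) := by
        have : Tendsto (fun n => |r n - c|) atTop (𝓝 0) := by
          have := (hr.sub_const c).abs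
          simpa using this
        simpa using (this.const_mul D).mul_const ((K:ℝ)+1)
      exact ht.eventually_lt_const (by positivity)
    have h1 : ∀ᶠ n in atTop, ∫ x, cutB d K x ∂(ρs n) < ε/2 := by
      refine (hw (cutB d K)).eventually_lt_const ?_
      linarith
    filter_upwards [h1, h2] with n hn1 hn2
    haveI := hp n
    have hint1 := integrable_exp_char (ρs n) (r n • z)
    have hint2 := integrable_exp_char (ρs n) (c • z)
    have hsub : charFn (ρs n) (r n • z) - charFn (ρs n) (c • z)
        = ∫ x, (Complex.exp (((inner ℝ (r n • z) x : ℝ) : ℂ) * Complex.I)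
            - Complex.exp (((inner ℝ (c • z) x : ℝ) : ℂ) * Complex.I)) ∂(ρs n) :=
      (integral_sub hint1 hint2).symm
    rw [hsub]
    have hptw : ∀ x : Ed d,
        ‖Complex.exp (((inner ℝ (r n • z) x : ℝ) : ℂ) * Complex.I)
          - Complex.exp (((inner ℝ (c • z) x : ℝ) : ℂ) * Complex.I)‖
        ≤ D * |r n - c| * ((K:ℝ)+1) + cutB d K x := by
      intro x
      have hb := norm_exp_sub_exp_le (inner ℝ (r n • z) x : ℝ) (inner ℝ (c • z) x : ℝ)
      have hinner : (inner ℝ (r n • z) x : ℝ) - (inner ℝ (c • z) x : ℝ) = (r n - c) * (inner ℝ z x : ℝ) := by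
        rw [real_inner_smul_left, real_inner_smul_left]; ring
      have hzx : |(inner ℝ z x : ℝ)| ≤ ‖z‖ * ‖x‖ := abs_real_inner_le_norm z x
      have hstep : 2 * |(inner ℝ (r n • z) x : ℝ) - (inner ℝ (c • z) x : ℝ)| ≤ D * |r n - c| * ‖x‖ := by
        rw [hinner, abs_mul, hD]
        have h1 : |r n - c| * |(inner ℝ z x : ℝ)| ≤ |r n - c| * (‖z‖ * ‖x‖) :=
          mul_le_mul_of_nonneg_left hzx (abs_nonneg _)
        nlinarith [mul_nonneg (abs_nonneg (r n - c)) (norm_nonneg x)]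
      have hmin : ‖Complex.exp (((inner ℝ (r n • z) x : ℝ) : ℂ) * Complex.I)
          - Complex.exp (((inner ℝ (c • z) x : ℝ) : ℂ) * Complex.I)‖
          ≤ min 2 (D * |r n - c| * ‖x‖) :=
        hb.trans (le_min (min_le_left _ _) ((min_le_right _ _).trans hstep))
      refine hmin.trans ?_
      rw [cutB_apply]
      rcases le_or_gt ‖x‖ ((K:ℝ)+1) with hx | hx
      · have : min 2 (D * |r n - c| * ‖x‖) ≤ D * |r n - c| * ((K:ℝ)+1) := by
          refine (min_le_right _ _).trans ?_
          exact mul_le_mul_of_nonneg_left hx (by positivity)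
        have h0 : (0:ℝ) ≤ min 2 ((2/((K:ℝ)+1)) * ‖x‖) :=
          le_min (by norm_num) (mul_nonneg (by positivity) (norm_nonneg x))
        exact this.trans (le_add_of_nonneg_right h0)
      · have h22 : (2:ℝ) ≤ (2/((K:ℝ)+1)) * ‖x‖ := by
          rw [div_mul_eq_mul_div, le_div_iff₀ (by positivity)]
          nlinarith
        rw [min_eq_left h22]
        have hDn : 0 ≤ D * |r n - c| * ((K:ℝ)+1) := by positivity
        exact (min_le_left _ _).trans (le_add_of_nonneg_left hDn)
    calc ‖∫ x, (Complex.exp (((inner ℝ (r n • z) x : ℝ) : ℂ) * Complex.I)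
            - Complex.exp (((inner ℝ (c • z) x : ℝ) : ℂ) * Complex.I)) ∂(ρs n)‖
        ≤ ∫ x, ‖Complex.exp (((inner ℝ (r n • z) x : ℝ) : ℂ) * Complex.I)
            - Complex.exp (((inner ℝ (c • z) x : ℝ) : ℂ) * Complex.I)‖ ∂(ρs n) :=
          norm_integral_le_integral_norm _
      _ ≤ ∫ x, (D * |r n - c| * ((K:ℝ)+1) + cutB d K x) ∂(ρs n) := by
          refine integral_mono (hint1.sub hint2).norm
            ((integrable_const _).add ((cutB d K).integrable _)) hptw
      _ = D * |r n - c| * ((K:ℝ)+1) + ∫ x, cutB d K x ∂(ρs n) := by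
          rw [integral_add (integrable_const _) ((cutB d K).integrable _), integral_const]
          simp
      _ < ε/2 + ε/2 := by exact add_lt_add hn2 hn1
      _ = ε := by ring
  have hfix := charFn_fixed_tendsto ρs hp ν hw (c • z)
  have := hdiff.add hfix
  simpa using this

lemma exists_pos_quadratic {d : ℕ} (B : Matrix (Fin d) (Fin d) ℝ)
    (hBsymm : B.IsSymm) (hBpsd : B.PosSemidef) (hB0 : B ≠ 0) :
    ∃ z₀ : Ed d, 0 < ∑ i, ∑ j, z₀ i * B i j * z₀ j := by
  have hform : ∀ x : Fin d → ℝ, x ⬝ᵥ (B *ᵥ x) = ∑ i, ∑ j, x i * B i j * x j := by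
    intro x
    simp [dotProduct, Matrix.mulVec, Finset.mul_sum, mul_assoc]
  have hnn : ∀ x : Fin d → ℝ, 0 ≤ x ⬝ᵥ (B *ᵥ x) := by
    intro x
    have := hBpsd.dotProduct_mulVec_nonneg x
    simpa using this
  by_contra hcon
  push_neg at hcon
  have hzero : ∀ x : Fin d → ℝ, x ⬝ᵥ (B *ᵥ x) = 0 := by
    intro x
    refine le_antisymm ?_ (hnn x)
    rw [hform]
    exact hcon (WithLp.toLp 2 x)
  apply hB0
  have hdiag : ∀ i, B i i = 0 := by
    intro i
    have := hzero (Pi.single i 1)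
    simpa [Matrix.mulVec_single, single_dotProduct] using this
  ext i j
  have hij := hzero (Pi.single i 1 + Pi.single j 1)
  have hexp : (Pi.single i 1 + Pi.single j 1) ⬝ᵥ (B *ᵥ (Pi.single i (1:ℝ) + Pi.single j 1))
      = B i i + B i j + (B j i + B j j) := by
    simp [Matrix.mulVec_add, Matrix.mulVec_single, add_dotProduct,
      single_dotProduct]
    ring
  rw [hexp] at hij
  have hsym : B j i = B i j := by
    have := congrFun (congrFun hBsymm i) j
    simpa [Matrix.transpose_apply] using this
  rw [hdiag i, hdiag j, hsym] at hij
  simp only [Matrix.zero_apply]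
  linarith

lemma gaussian_norm {d : ℕ} (B : Matrix (Fin d) (Fin d) ℝ) (ν : Measure (Ed d))
    (hGauss : ∀ z : Ed d, charFn ν z =
      Complex.exp (-(((∑ i, ∑ j, z i * B i j * z j : ℝ) : ℂ)) / 2)) (z₀ : Ed d) (c : ℝ) :
    ‖charFn ν (c • z₀)‖
      = Real.exp (-(c^2 * (∑ i, ∑ j, z₀ i * B i j * z₀ j)) / 2) := by
  rw [hGauss (c • z₀)]
  have hsum : (∑ i, ∑ j, (c • z₀) i * B i j * (c • z₀) j)
      = c^2 * (∑ i, ∑ j, z₀ i * B i j * z₀ j) := by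
    rw [Finset.mul_sum]
    refine Finset.sum_congr rfl fun i _ => ?_
    rw [Finset.mul_sum]
    refine Finset.sum_congr rfl fun j _ => ?_
    simp only [PiLp.smul_apply, smul_eq_mul]
    ring
  rw [hsum]
  have harg : (-(((c^2 * (∑ i, ∑ j, z₀ i * B i j * z₀ j) : ℝ) : ℂ)) / 2)
      = (((-(c^2 * (∑ i, ∑ j, z₀ i * B i j * z₀ j)) / 2 : ℝ)) : ℂ) := by
    push_cast; ring
  rw [harg, Complex.norm_exp_ofReal]

lemma floor_ratio_tendsto {lam : ℝ} (hlam : 0 < lam) :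
    Tendsto (fun n : ℕ => ((⌊lam * n⌋₊ : ℝ)) / n) atTop (𝓝 lam) := by
  have hlow : Tendsto (fun n : ℕ => lam - 1/(n:ℝ)) atTop (𝓝 lam) := by
    have := tendsto_one_div_atTop_nhds_zero_nat (𝕜 := ℝ)
    simpa using tendsto_const_nhds.sub this
  refine tendsto_of_tendsto_of_tendsto_of_le_of_le' hlow tendsto_const_nhds ?_ ?_
  · filter_upwards [eventually_ge_atTop 1] with n hn
    have hn0 : (0:ℝ) < n := by exact_mod_cast hn
    have h1 : lam * n - 1 < (⌊lam * n⌋₊ : ℝ) := Nat.sub_one_lt_floor _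
    rw [le_div_iff₀ hn0]
    have he : (lam - 1/(n:ℝ))*n = lam*n - 1 := by field_simp
    rw [he]
    linarith
  · filter_upwards [eventually_ge_atTop 1] with n hn
    have hn0 : (0:ℝ) < n := by exact_mod_cast hn
    have h2 : (⌊lam * n⌋₊ : ℝ) ≤ lam * n := Nat.floor_le (by positivity)
    rw [div_le_iff₀ hn0]
    linarith


/-- If the shifted and scaled convolution powers of `μ` converge weakly to
`N(0,B)` with `B ≠ 0`, then the norming sequence `(a_n)` is regularly varying at `∞` with
index `-1/2`: for every `λ > 0`, `a ⌊λn⌋ / a n → λ^(-1/2)`. -/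
theorem norming_seq_regularly_varying {d : ℕ} (hd : 1 ≤ d)
    (B : Matrix (Fin d) (Fin d) ℝ) (hBsymm : B.IsSymm) (hBpsd : B.PosSemidef) (hB0 : B ≠ 0)
    (μ : Measure (Ed d)) [IsProbabilityMeasure μ]
    (a : ℕ → ℝ) (ξ : ℕ → Ed d) (hapos : ∀ n, 0 < a n)
    (hconv : ∃ ν : Measure (Ed d), IsGaussianN B ν ∧
      WeakTendsto atTop (fun n => (convPow μ n).map (fun x => a n • x - ξ n)) ν) :
    ∀ lam : ℝ, 0 < lam →
      Tendsto (fun n : ℕ => a ⌊lam * n⌋₊ / a n) atTop (𝓝 (lam ^ (-(1 / 2) : ℝ))) := by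
  intro lam hlam
  obtain ⟨ν, ⟨hνprob, hGauss⟩, hw⟩ := hconv
  haveI := hνprob
  set ρs : ℕ → Measure (Ed d) := fun n => (convPow μ n).map (fun x => a n • x - ξ n) with hρs
  have hp : ∀ n, IsProbabilityMeasure (ρs n) := by
    intro n
    haveI : IsProbabilityMeasure (convPow μ n) :=
      Measure.isProbabilityMeasure_map
        (Finset.measurable_sum _ (fun i _ => measurable_pi_apply i)).aemeasurable
    exact Measure.isProbabilityMeasure_map
      (((continuous_id.const_smul (a n)).sub continuous_const).measurable).aemeasurable
  obtain ⟨z₀, hq⟩ := exists_pos_quadratic B hBsymm hBpsd hB0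
  set q : ℝ := ∑ i, ∑ j, z₀ i * B i j * z₀ j with hqdef
  have hνval : ∀ c : ℝ, ‖charFn ν (c • z₀)‖ = Real.exp (-(c^2*q)/2) :=
    fun c => gaussian_norm B ν hGauss z₀ c
  set L : ℝ := Real.exp (-q/2) with hLdef
  have hL0 : 0 < L := Real.exp_pos _
  have hL1 : L < 1 := by
    rw [hLdef]
    calc Real.exp (-q/2) < Real.exp 0 := Real.exp_lt_exp.mpr (by linarith)
      _ = 1 := Real.exp_zero
  have hLpow : ∀ y : ℝ, L ^ (y:ℝ) = Real.exp (-q/2 * y) := by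
    intro y
    rw [hLdef, ← Real.exp_mul]
  have hgnorm : ∀ (m : ℕ) (t : ℝ), ‖charFn (ρs m) (t • z₀)‖ = ‖charFn μ ((a m * t) • z₀)‖ ^ m :=
    fun m t => norm_charFn_map μ m (a m) (ξ m) t z₀
  set nn : ℕ → ℕ := fun n => ⌊lam * n⌋₊ with hnn
  set r : ℕ → ℝ := fun n => a (nn n) / a n with hrdef
  have hrpos : ∀ n, 0 < r n := fun n => div_pos (hapos _) (hapos _)
  have hamr : ∀ m, a m * r m = a (nn m) := by
    intro m
    show a m * (a (nn m) / a m) = a (nn m)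
    rw [mul_comm, div_mul_cancel₀ _ (hapos m).ne']
  have hamr' : ∀ m, a (nn m) * (r m)⁻¹ = a m := by
    intro m
    show a (nn m) * (a (nn m) / a m)⁻¹ = a m
    rw [inv_div, mul_comm, div_mul_cancel₀ _ (hapos (nn m)).ne']
  -- basic convergences
  have hone : Tendsto (fun m => ‖charFn (ρs m) ((1:ℝ) • z₀)‖) atTop (𝓝 L) := by
    have h := (charFn_tendsto_of_weak ρs hp ν hw (fun _ => (1:ℝ)) 1 tendsto_const_nhds z₀).norm
    rw [hνval 1] at h
    simpa [hLdef, one_pow] using h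
  have hfl : Tendsto (fun n : ℕ => ((nn n : ℝ))/n) atTop (𝓝 lam) := floor_ratio_tendsto hlam
  have hfloorTop : Tendsto nn atTop atTop := by
    rw [hnn]
    exact tendsto_nat_floor_atTop.comp
      (Tendsto.const_mul_atTop hlam tendsto_natCast_atTop_atTop)
  have hinvfl : Tendsto (fun n : ℕ => (n:ℝ)/(nn n : ℝ)) atTop (𝓝 lam⁻¹) := by
    have := hfl.inv₀ (ne_of_gt hlam)
    simpa [inv_div] using this
  have hG : Tendsto (fun m => ‖charFn (ρs (nn m)) ((1:ℝ) • z₀)‖) atTop (𝓝 L) :=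
    hone.comp hfloorTop
  have hnn1 : ∀ᶠ m in atTop, 1 ≤ nn m := hfloorTop.eventually_ge_atTop 1
  -- full-sequence convergence 1 : gnorm m (r m) → L ^ lam⁻¹
  have hkey1 : Tendsto (fun m => ‖charFn (ρs m) (r m • z₀)‖) atTop (𝓝 (L ^ (lam⁻¹ : ℝ))) := by
    have hev : ∀ᶠ m in atTop, ‖charFn (ρs (nn m)) ((1:ℝ) • z₀)‖ ^ ((m:ℝ)/((nn m):ℝ))
        = ‖charFn (ρs m) (r m • z₀)‖ := by
      filter_upwards [hnn1, hG.eventually_const_lt (half_lt_self hL0),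
        eventually_ge_atTop 1] with m h1 h2 hm1
      have hGm : ‖charFn (ρs (nn m)) ((1:ℝ) • z₀)‖
          = ‖charFn μ (a (nn m) • z₀)‖ ^ (nn m) := by
        rw [hgnorm (nn m) 1, mul_one]
      have hu0 : 0 < ‖charFn μ (a (nn m) • z₀)‖ := by
        rcases lt_or_eq_of_le (norm_nonneg (charFn μ (a (nn m) • z₀))) with h | h
        · exact h
        · exfalso
          rw [hGm, ← h, zero_pow (by omega : nn m ≠ 0)] at h2
          linarith [half_pos hL0]
      have hum : ‖charFn (ρs m) (r m • z₀)‖ = ‖charFn μ (a (nn m) • z₀)‖ ^ m := by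
        rw [hgnorm m (r m), hamr m]
      rw [hum, hGm, ← Real.rpow_natCast _ m, ← Real.rpow_natCast _ (nn m),
        ← Real.rpow_mul hu0.le]
      congr 1
      have hnn0 : ((nn m : ℝ)) ≠ 0 := by
        have : (0:ℝ) < nn m := by exact_mod_cast h1
        exact this.ne'
      field_simp
    exact (hG.rpow hinvfl (Or.inl hL0.ne')).congr' hev
  -- full-sequence convergence 2 : gnorm (nn m) (1/r m) → L ^ lam
  have hkey2 : Tendsto (fun m => ‖charFn (ρs (nn m)) ((r m)⁻¹ • z₀)‖) atTop (𝓝 (L ^ (lam : ℝ))) := by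
    have hev : ∀ᶠ m in atTop, ‖charFn (ρs m) ((1:ℝ) • z₀)‖ ^ (((nn m):ℝ)/(m:ℝ))
        = ‖charFn (ρs (nn m)) ((r m)⁻¹ • z₀)‖ := by
      filter_upwards [hone.eventually_const_lt (half_lt_self hL0),
        eventually_ge_atTop 1] with m h2 hm1
      have hGm : ‖charFn (ρs m) ((1:ℝ) • z₀)‖ = ‖charFn μ (a m • z₀)‖ ^ m := by
        rw [hgnorm m 1, mul_one]
      have hu0 : 0 < ‖charFn μ (a m • z₀)‖ := by
        rcases lt_or_eq_of_le (norm_nonneg (charFn μ (a m • z₀))) with h | h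
        · exact h
        · exfalso
          rw [hGm, ← h, zero_pow (by omega : m ≠ 0)] at h2
          linarith [half_pos hL0]
      have hum : ‖charFn (ρs (nn m)) ((r m)⁻¹ • z₀)‖ = ‖charFn μ (a m • z₀)‖ ^ (nn m) := by
        rw [hgnorm (nn m) ((r m)⁻¹), hamr' m]
      rw [hum, hGm, ← Real.rpow_natCast _ m, ← Real.rpow_natCast _ (nn m),
        ← Real.rpow_mul hu0.le]
      congr 1
      have hm0 : ((m : ℝ)) ≠ 0 := by
        have : (0:ℝ) < m := by exact_mod_cast hm1
        exact this.ne'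
      field_simp
    exact (hone.rpow hfl (Or.inl hL0.ne')).congr' hev
  -- subsequence argument
  apply tendsto_of_subseq_tendsto
  intro ns hns
  have hbdd : ∀ k, Real.arctan (r (ns k)) ∈ Set.Icc (-(Real.pi/2)) (Real.pi/2) :=
    fun k => ⟨(Real.neg_pi_div_two_lt_arctan _).le, (Real.arctan_lt_pi_div_two _).le⟩
  obtain ⟨θ, hθmem, φ, hφmono, hφconv⟩ :=
    tendsto_subseq_of_bounded (Metric.isBounded_Icc _ _) hbdd
  rw [isClosed_Icc.closure_eq] at hθmem
  have hnsφ : Tendsto (fun k => ns (φ k)) atTop atTop := hns.comp hφmono.tendsto_atTop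
  have hwφ : WeakTendsto atTop (fun k => ρs (ns (φ k))) ν := fun g => (hw g).comp hnsφ
  have hθ0 : 0 ≤ θ := by
    refine ge_of_tendsto' hφconv (fun k => ?_)
    have : Real.arctan 0 < Real.arctan (r (ns (φ k))) := Real.arctan_strictMono (hrpos _)
    rw [Real.arctan_zero] at this
    exact this.le
  rcases lt_or_eq_of_le hθmem.2 with hθlt | hθeq
  · -- θ < π/2 : convergent subsequence with limit c = tan θ
    have hcospos : 0 < Real.cos θ :=
      Real.cos_pos_of_mem_Ioo ⟨by linarith [Real.pi_pos], hθlt⟩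
    set c := Real.tan θ with hcdef
    have hc : Tendsto (fun k => r (ns (φ k))) atTop (𝓝 c) := by
      have hcont : ContinuousAt Real.tan θ := Real.continuousAt_tan.mpr hcospos.ne'
      have h := hcont.tendsto.comp hφconv
      refine h.congr (fun k => ?_)
      simp [Function.comp, Real.tan_arctan]
    have hc0 : 0 ≤ c := ge_of_tendsto' hc (fun k => (hrpos _).le)
    have hA : Tendsto (fun k => ‖charFn (ρs (ns (φ k))) (r (ns (φ k)) • z₀)‖) atTop
        (𝓝 (Real.exp (-(c^2*q)/2))) := by
      have h := (charFn_tendsto_of_weak (fun k => ρs (ns (φ k))) (fun k => hp _) ν hwφ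
        (fun k => r (ns (φ k))) c hc z₀).norm
      rwa [hνval c] at h
    have hB : Tendsto (fun k => ‖charFn (ρs (ns (φ k))) (r (ns (φ k)) • z₀)‖) atTop
        (𝓝 (L ^ (lam⁻¹:ℝ))) := hkey1.comp hnsφ
    have heq := tendsto_nhds_unique hA hB
    rw [hLpow lam⁻¹] at heq
    have heq2 : -(c^2*q)/2 = -q/2 * lam⁻¹ := Real.exp_eq_exp.mp heq
    have hc2 : c^2 = lam⁻¹ := by
      have hq' : q ≠ 0 := hq.ne'
      have h3 : c^2*q = lam⁻¹*q := by linarith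
      exact mul_right_cancel₀ hq' h3
    have hcval : c = lam ^ (-(1/2) : ℝ) := by
      have h4 : c = Real.sqrt lam⁻¹ := by rw [← Real.sqrt_sq hc0, hc2]
      rw [h4, Real.sqrt_eq_rpow, Real.inv_rpow hlam.le, ← Real.rpow_neg hlam.le]
    exact ⟨φ, hcval ▸ hc⟩
  · -- θ = π/2 : ratio tends to infinity, contradiction
    have hinf : Tendsto (fun k => r (ns (φ k))) atTop atTop := by
      rw [tendsto_atTop]
      intro C
      have h1 : Real.arctan C < θ := by rw [hθeq]; exact Real.arctan_lt_pi_div_two C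
      filter_upwards [hφconv.eventually_const_lt h1] with k hk
      exact (Real.arctan_strictMono.lt_iff_lt.mp hk).le
    have hiv : Tendsto (fun k => (r (ns (φ k)))⁻¹) atTop (𝓝 0) :=
      tendsto_inv_atTop_zero.comp hinf
    have hnnφ : Tendsto (fun k => nn (ns (φ k))) atTop atTop := hfloorTop.comp hnsφ
    have hwφ2 : WeakTendsto atTop (fun k => ρs (nn (ns (φ k)))) ν := fun g => (hw g).comp hnnφ
    have hA2 : Tendsto (fun k => ‖charFn (ρs (nn (ns (φ k)))) ((r (ns (φ k)))⁻¹ • z₀)‖) atTop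
        (𝓝 1) := by
      have h := (charFn_tendsto_of_weak (fun k => ρs (nn (ns (φ k)))) (fun k => hp _) ν hwφ2
        (fun k => (r (ns (φ k)))⁻¹) 0 hiv z₀).norm
      rw [hνval 0] at h
      simpa using h
    have hB2 : Tendsto (fun k => ‖charFn (ρs (nn (ns (φ k)))) ((r (ns (φ k)))⁻¹ • z₀)‖) atTop
        (𝓝 (L ^ (lam:ℝ))) := hkey2.comp hnsφ
    have hEq : L ^ (lam:ℝ) = 1 := tendsto_nhds_unique hB2 hA2
    have hLt : L ^ (lam:ℝ) < 1 := Real.rpow_lt_one hL0.le hL1 hlam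
    exact absurd hEq (ne_of_lt hLt)


end
end

section
/- Let d ≥ 1 and let M be a Lévy measure on ℝ^d such that the function t ↦ ∫_{|x|≤t} |x|² M(dx) is positive for all t > 0 and slowly varying at ∞ (regularly varying at ∞ with index 0). Then for every η ∈ [0,2), ∫_{|x|>1} |x|^η M(dx) < ∞. -/
open MeasureTheory Filter Topology Matrix

noncomputable section

/-- If the truncated second moment function of a Lévy measure `M` is positive
and slowly varying at `∞`, then `∫_{|x|>1} |x|^η dM < ∞` for every `η ∈ [0,2)`. -/
theorem levy_measure_eta_moment_finite_of_slowly_varying {d : ℕ} (hd : 1 ≤ d)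
    (M : Measure (Ed d)) (hM : IsLevyMeasure M)
    (hpos : ∀ t : ℝ, 0 < t → 0 < ∫ x in {x : Ed d | ‖x‖ ≤ t}, ‖x‖ ^ 2 ∂M)
    (hsv : RegVar atTop (fun t => ∫ x in {x : Ed d | ‖x‖ ≤ t}, ‖x‖ ^ 2 ∂M) 0) :
    ∀ η : ℝ, 0 ≤ η → η < 2 →
      (∫⁻ x in {x : Ed d | 1 < ‖x‖}, ENNReal.ofReal (‖x‖ ^ η) ∂M) < ⊤ := by
  intro η hη0 hη2
  classical
  set U : ℝ → ℝ := fun t => ∫ x in {x : Ed d | ‖x‖ ≤ t}, ‖x‖ ^ 2 ∂M with hUdef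
  have hInt : ∀ t : ℝ, 0 < t → IntegrableOn (fun x : Ed d => ‖x‖ ^ 2) {x | ‖x‖ ≤ t} M := by
    intro t ht
    by_contra h
    exact (hpos t ht).ne' (integral_undef h)
  have hUpos : ∀ t : ℝ, 0 < t → 0 < U t := hpos
  have hL : ∀ t : ℝ, 0 < t →
      (∫⁻ x in {x : Ed d | ‖x‖ ≤ t}, ENNReal.ofReal (‖x‖ ^ 2) ∂M) = ENNReal.ofReal (U t) := by
    intro t ht
    exact (MeasureTheory.ofReal_integral_eq_lintegral_ofReal (hInt t ht)
      (Filter.Eventually.of_forall fun x => sq_nonneg _)).symm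
  -- constants
  set c : ℝ := (2 : ℝ) ^ ((2 - η) / 2) with hcdef
  have hc1 : 1 < c := by
    rw [hcdef, Real.one_lt_rpow_iff_of_pos (by norm_num)]
    exact Or.inl ⟨one_lt_two, by linarith⟩
  have hc0 : 0 < c := lt_trans one_pos hc1
  set r : ℝ := (2 : ℝ) ^ (η - 2) * c with hrdef
  have hr0 : 0 ≤ r := mul_nonneg (Real.rpow_nonneg (by norm_num) _) hc0.le
  have hr1 : r < 1 := by
    have : r = (2 : ℝ) ^ ((η - 2) / 2) := by
      rw [hrdef, hcdef, ← Real.rpow_add (by norm_num)]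
      ring_nf
    rw [this]
    exact Real.rpow_lt_one_of_one_lt_of_neg one_lt_two (by linarith)
  -- eventual slow-variation bound
  have h2 := hsv 2 two_pos
  rw [Real.rpow_zero] at h2
  obtain ⟨A₀, hA₀⟩ := Filter.eventually_atTop.1 (h2.eventually_le_const hc1)
  set A : ℝ := max A₀ 1 with hAdef
  have hA1 : (1 : ℝ) ≤ A := le_max_right _ _
  have hApos : (0 : ℝ) < A := lt_of_lt_of_le one_pos hA1
  have hstep : ∀ x : ℝ, A ≤ x → U (2 * x) ≤ c * U x := by
    intro x hx
    have hxpos : 0 < x := lt_of_lt_of_le hApos hx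
    have := hA₀ x (le_trans (le_max_left _ _) hx)
    exact (div_le_iff₀ (hUpos x hxpos)).1 this
  have hV : ∀ n : ℕ, U (A * 2 ^ n) ≤ c ^ n * U A := by
    intro n
    induction n with
    | zero => simp
    | succ n ih =>
      have h1 : A * 2 ^ (n + 1) = 2 * (A * 2 ^ n) := by ring
      have h2' : A ≤ A * 2 ^ n :=
        le_mul_of_one_le_right hApos.le (one_le_pow₀ one_le_two)
      calc U (A * 2 ^ (n + 1)) = U (2 * (A * 2 ^ n)) := by rw [h1]
        _ ≤ c * U (A * 2 ^ n) := hstep _ h2'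
        _ ≤ c * (c ^ n * U A) := _root_.mul_le_mul_of_nonneg_left ih hc0.le
        _ = c ^ (n + 1) * U A := by ring
  -- annulus bound
  have hann : ∀ n : ℕ,
      (∫⁻ x in {x : Ed d | A * 2 ^ n < ‖x‖ ∧ ‖x‖ ≤ A * 2 ^ (n + 1)},
        ENNReal.ofReal (‖x‖ ^ η) ∂M) ≤ ENNReal.ofReal ((c * U A) * r ^ n) := by
    intro n
    set T : ℝ := A * 2 ^ n with hTdef
    have hTpos : 0 < T := mul_pos hApos (by positivity)
    have hT1 : (1 : ℝ) ≤ T := by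
      have h2n : (1 : ℝ) ≤ 2 ^ n := one_le_pow₀ one_le_two
      rw [hTdef]; nlinarith
    set k : ℝ := T ^ (η - 2) with hkdef
    have hk0 : 0 ≤ k := Real.rpow_nonneg hTpos.le _
    have hptwise : ∀ x : Ed d, x ∈ {x : Ed d | T < ‖x‖ ∧ ‖x‖ ≤ A * 2 ^ (n + 1)} →
        ENNReal.ofReal (‖x‖ ^ η) ≤ ENNReal.ofReal (k * ‖x‖ ^ 2) := by
      intro x hx
      apply ENNReal.ofReal_le_ofReal
      have hxpos : 0 < ‖x‖ := lt_trans hTpos hx.1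
      have h1 : ‖x‖ ^ η = ‖x‖ ^ (η - 2) * ‖x‖ ^ (2 : ℕ) := by
        rw [← Real.rpow_natCast ‖x‖ 2, ← Real.rpow_add hxpos]
        norm_num
      rw [h1]
      exact mul_le_mul_of_nonneg_right
        (Real.rpow_le_rpow_of_nonpos hTpos hx.1.le (by linarith)) (by positivity)
    calc (∫⁻ x in {x : Ed d | T < ‖x‖ ∧ ‖x‖ ≤ A * 2 ^ (n + 1)},
          ENNReal.ofReal (‖x‖ ^ η) ∂M)
        ≤ ∫⁻ x in {x : Ed d | T < ‖x‖ ∧ ‖x‖ ≤ A * 2 ^ (n + 1)},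
          ENNReal.ofReal (k * ‖x‖ ^ 2) ∂M := by
          refine setLIntegral_mono ?_ hptwise
          exact (((measurable_norm.pow_const 2).const_mul k).ennreal_ofReal)
      _ = ENNReal.ofReal k * ∫⁻ x in {x : Ed d | T < ‖x‖ ∧ ‖x‖ ≤ A * 2 ^ (n + 1)},
          ENNReal.ofReal (‖x‖ ^ 2) ∂M := by
          simp_rw [ENNReal.ofReal_mul hk0]
          exact lintegral_const_mul' _ _ ENNReal.ofReal_ne_top
      _ ≤ ENNReal.ofReal k * ∫⁻ x in {x : Ed d | ‖x‖ ≤ A * 2 ^ (n + 1)},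
          ENNReal.ofReal (‖x‖ ^ 2) ∂M := by
          gcongr
          exact fun hx => hx.2
      _ = ENNReal.ofReal k * ENNReal.ofReal (U (A * 2 ^ (n + 1))) := by
          rw [hL _ (mul_pos hApos (by positivity))]
      _ = ENNReal.ofReal (k * U (A * 2 ^ (n + 1))) := (ENNReal.ofReal_mul hk0).symm
      _ ≤ ENNReal.ofReal ((c * U A) * r ^ n) := by
          apply ENNReal.ofReal_le_ofReal
          have hUA : 0 ≤ U A := (hUpos A hApos).le
          have hk2 : k ≤ ((2 : ℝ) ^ (η - 2)) ^ n := by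
            have e1 : ((2 : ℝ) ^ n : ℝ) ^ (η - 2) = ((2 : ℝ) ^ (η - 2)) ^ n := by
              rw [← Real.rpow_natCast (2 : ℝ) n,
                ← Real.rpow_natCast ((2 : ℝ) ^ (η - 2)) n,
                ← Real.rpow_mul (by norm_num), ← Real.rpow_mul (by norm_num), mul_comm]
            rw [hkdef, ← e1]
            exact Real.rpow_le_rpow_of_nonpos (by positivity)
              (le_mul_of_one_le_left (by positivity) hA1) (by linarith)
          have hVn : U (A * 2 ^ (n + 1)) ≤ c ^ (n + 1) * U A := hV (n + 1)
          calc k * U (A * 2 ^ (n + 1)) ≤ k * (c ^ (n + 1) * U A) :=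
                _root_.mul_le_mul_of_nonneg_left hVn hk0
            _ ≤ ((2 : ℝ) ^ (η - 2)) ^ n * (c ^ (n + 1) * U A) :=
                _root_.mul_le_mul_of_nonneg_right hk2 (by positivity)
            _ = (c * U A) * r ^ n := by rw [hrdef, mul_pow]; ring
  -- the bounded annulus near 1
  have hMfin : M {x : Ed d | 1 < ‖x‖} < ⊤ := by
    have hmeas : Measurable fun x : Ed d => ENNReal.ofReal (min (‖x‖ ^ 2) 1) :=
      ((measurable_norm.pow_const 2).min measurable_const).ennreal_ofReal
    calc M {x : Ed d | 1 < ‖x‖} = ∫⁻ _x in {x : Ed d | 1 < ‖x‖}, 1 ∂M :=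
          (setLIntegral_one _).symm
      _ ≤ ∫⁻ x in {x : Ed d | 1 < ‖x‖}, ENNReal.ofReal (min (‖x‖ ^ 2) 1) ∂M := by
          refine setLIntegral_mono hmeas fun x hx => ?_
          have hx' : 1 < ‖x‖ := hx
          have : min (‖x‖ ^ 2) 1 = 1 := min_eq_right (by nlinarith [hx'.le])
          simp [this]
      _ ≤ ∫⁻ x, ENNReal.ofReal (min (‖x‖ ^ 2) 1) ∂M :=
          setLIntegral_le_lintegral _ _
      _ < ⊤ := hM.2
  have hB : (∫⁻ x in {x : Ed d | 1 < ‖x‖ ∧ ‖x‖ ≤ A}, ENNReal.ofReal (‖x‖ ^ η) ∂M)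
      ≤ ENNReal.ofReal (A ^ η) * M {x : Ed d | 1 < ‖x‖} := by
    calc (∫⁻ x in {x : Ed d | 1 < ‖x‖ ∧ ‖x‖ ≤ A}, ENNReal.ofReal (‖x‖ ^ η) ∂M)
        ≤ ∫⁻ _x in {x : Ed d | 1 < ‖x‖ ∧ ‖x‖ ≤ A}, ENNReal.ofReal (A ^ η) ∂M := by
          refine setLIntegral_mono measurable_const fun x hx => ?_
          have hx' : 1 < ‖x‖ ∧ ‖x‖ ≤ A := hx
          exact ENNReal.ofReal_le_ofReal (Real.rpow_le_rpow (norm_nonneg _) hx'.2 hη0)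
      _ = ENNReal.ofReal (A ^ η) * M {x : Ed d | 1 < ‖x‖ ∧ ‖x‖ ≤ A} := by
          rw [setLIntegral_const]
      _ ≤ ENNReal.ofReal (A ^ η) * M {x : Ed d | 1 < ‖x‖} := by
          gcongr
          exact fun hx => hx.1
  -- covering
  have hcover : {x : Ed d | 1 < ‖x‖} ⊆
      {x : Ed d | 1 < ‖x‖ ∧ ‖x‖ ≤ A} ∪
        ⋃ n : ℕ, {x : Ed d | A * 2 ^ n < ‖x‖ ∧ ‖x‖ ≤ A * 2 ^ (n + 1)} := by
    intro x hx
    by_cases hxA : ‖x‖ ≤ A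
    · exact Or.inl ⟨hx, hxA⟩
    · push_neg at hxA
      right
      obtain ⟨m, hm⟩ := pow_unbounded_of_one_lt ‖x‖ (one_lt_two : (1:ℝ) < 2)
      have hP : ∃ m : ℕ, ‖x‖ ≤ A * 2 ^ m :=
        ⟨m, hm.le.trans (le_mul_of_one_le_left (by positivity) hA1)⟩
      set m0 := Nat.find hP with hm0
      have hspec : ‖x‖ ≤ A * 2 ^ m0 := Nat.find_spec hP
      have hm0pos : m0 ≠ 0 := by
        intro h
        rw [h] at hspec
        simp at hspec
        exact absurd hspec (not_le.2 hxA)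
      obtain ⟨n, hn⟩ := Nat.exists_eq_succ_of_ne_zero hm0pos
      have hmin : ¬ (‖x‖ ≤ A * 2 ^ n) := Nat.find_min hP (by omega)
      push_neg at hmin
      exact Set.mem_iUnion.2 ⟨n, ⟨hmin, hspec.trans_eq (by rw [hn])⟩⟩
  -- final computation
  calc (∫⁻ x in {x : Ed d | 1 < ‖x‖}, ENNReal.ofReal (‖x‖ ^ η) ∂M)
      ≤ ∫⁻ x in ({x : Ed d | 1 < ‖x‖ ∧ ‖x‖ ≤ A} ∪
          ⋃ n : ℕ, {x : Ed d | A * 2 ^ n < ‖x‖ ∧ ‖x‖ ≤ A * 2 ^ (n + 1)}),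
          ENNReal.ofReal (‖x‖ ^ η) ∂M := lintegral_mono_set hcover
    _ ≤ (∫⁻ x in {x : Ed d | 1 < ‖x‖ ∧ ‖x‖ ≤ A}, ENNReal.ofReal (‖x‖ ^ η) ∂M) +
        ∫⁻ x in (⋃ n : ℕ, {x : Ed d | A * 2 ^ n < ‖x‖ ∧ ‖x‖ ≤ A * 2 ^ (n + 1)}),
          ENNReal.ofReal (‖x‖ ^ η) ∂M := lintegral_union_le _ _ _
    _ ≤ (∫⁻ x in {x : Ed d | 1 < ‖x‖ ∧ ‖x‖ ≤ A}, ENNReal.ofReal (‖x‖ ^ η) ∂M) +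
        ∑' n : ℕ, ∫⁻ x in {x : Ed d | A * 2 ^ n < ‖x‖ ∧ ‖x‖ ≤ A * 2 ^ (n + 1)},
          ENNReal.ofReal (‖x‖ ^ η) ∂M := by
          gcongr
          exact lintegral_iUnion_le _ _
    _ ≤ ENNReal.ofReal (A ^ η) * M {x : Ed d | 1 < ‖x‖} +
        ∑' n : ℕ, ENNReal.ofReal ((c * U A) * r ^ n) :=
          add_le_add hB (ENNReal.tsum_le_tsum hann)
    _ < ⊤ := by
        apply ENNReal.add_lt_top.2
        constructor
        · exact ENNReal.mul_lt_top ENNReal.ofReal_lt_top hMfin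
        · have heq : ∀ n : ℕ, ENNReal.ofReal ((c * U A) * r ^ n) =
              ENNReal.ofReal (c * U A) * (ENNReal.ofReal r) ^ n := by
            intro n
            rw [ENNReal.ofReal_mul (by positivity), ENNReal.ofReal_pow hr0]
          simp_rw [heq]
          rw [ENNReal.tsum_mul_left]
          apply ENNReal.mul_lt_top ENNReal.ofReal_lt_top
          rw [ENNReal.tsum_geometric]
          refine ENNReal.inv_lt_top.2 ?_
          rw [tsub_pos_iff_lt]
          exact ENNReal.ofReal_lt_one.2 hr1


end
end

section
/- Let ρ > 0 and let f : (0,∞) → (0,∞) be a Borel function that is regularly varying at 0 with index ρ, i.e. for every t > 0, f(tx)/f(x) → t^ρ as x → 0+. Define f^←(x) = inf{ y > 0 : f(y) > x }. Then f^← is regularly varying at 0 with index 1/ρ, and f^← is an asymptotic inverse of f at 0 in the sense that f(f^←(x))/x → 1 and f^←(f(x))/x → 1 as x → 0+. -/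
open MeasureTheory Filter Topology Matrix

noncomputable section

section RegVarAux

lemma uct (k : ℝ → ℝ) (hk : Measurable k) (ρ : ℝ)
    (h : ∀ s : ℝ, Tendsto (fun u => k (u + s) - k u) atTop (𝓝 (-(ρ * s)))) :
    ∀ ε > 0, ∃ U : ℝ, ∀ u ≥ U, ∀ s ∈ Set.Icc (0:ℝ) 1, |k (u + s) - k u + ρ * s| ≤ ε := by
  by_contra hcon
  push_neg at hcon
  obtain ⟨ε, hε, hbad⟩ := hcon
  choose u hu s hs hgt using fun n : ℕ => hbad n
  -- u n ≥ n, s n ∈ Icc 0 1, ε < |k (u n + s n) - k (u n) + ρ * s n|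
  have huT : Tendsto u atTop atTop :=
    tendsto_atTop_mono hu tendsto_natCast_atTop_atTop
  have husT : Tendsto (fun n => u n + s n) atTop atTop :=
    tendsto_atTop_mono (fun n => le_add_of_nonneg_right (hs n).1) huT
  set g : ℝ → ℝ := fun r => -(ρ * r) with hg
  set F : ℕ → ℝ → ℝ := fun n r => k (u n + r) - k (u n) with hF
  set G : ℕ → ℝ → ℝ := fun n r => k (u n + s n + r) - k (u n + s n) with hG
  have hFm : ∀ n, StronglyMeasurable (F n) := fun n =>
    ((hk.comp (measurable_const.add measurable_id)).sub measurable_const).stronglyMeasurable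
  have hGm : ∀ n, StronglyMeasurable (G n) := fun n =>
    ((hk.comp (measurable_const.add measurable_id)).sub measurable_const).stronglyMeasurable
  have hgm : StronglyMeasurable g := (measurable_const.mul measurable_id).neg.stronglyMeasurable
  have hFt : ∀ r : ℝ, Tendsto (fun n => F n r) atTop (𝓝 (g r)) := fun r => (h r).comp huT
  have hGt : ∀ r : ℝ, Tendsto (fun n => G n r) atTop (𝓝 (g r)) := fun r => (h r).comp husT
  have hIcc : MeasurableSet (Set.Icc (0:ℝ) 4) := measurableSet_Icc
  have hIne : volume (Set.Icc (0:ℝ) 4) ≠ ⊤ := by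
    rw [Real.volume_Icc]; simp
  obtain ⟨tA, htAs, htAm, htAle, hA⟩ :=
    tendstoUniformlyOn_of_ae_tendsto (μ := volume) hFm hgm hIcc hIne
      (ae_of_all _ fun r _ => hFt r) (ε := 1) one_pos
  obtain ⟨tB, htBs, htBm, htBle, hB⟩ :=
    tendstoUniformlyOn_of_ae_tendsto (μ := volume) hGm hgm hIcc hIne
      (ae_of_all _ fun r _ => hGt r) (ε := 1) one_pos
  set A := Set.Icc (0:ℝ) 4 \ tA with hAdef
  set B := Set.Icc (0:ℝ) 4 \ tB with hBdef
  have hmA : MeasurableSet A := hIcc.diff htAm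
  have hmB : MeasurableSet B := hIcc.diff htBm
  have key : ∀ t : Set ℝ, volume t ≤ ENNReal.ofReal 1 → 3 ≤ volume (Set.Icc (0:ℝ) 4 \ t) := by
    intro t htle
    have h1 : volume (Set.Icc (0:ℝ) 4) ≤ volume t + volume (Set.Icc (0:ℝ) 4 \ t) := by
      exact (measure_mono (by rw [Set.union_diff_self]; exact Set.subset_union_right)).trans
        (measure_union_le _ _)
    rw [Real.volume_Icc] at h1
    have h2 : (ENNReal.ofReal (4 - 0)) ≤ ENNReal.ofReal 1 + volume (Set.Icc (0:ℝ) 4 \ t) :=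
      h1.trans (add_le_add htle le_rfl)
    by_contra hlt
    push_neg at hlt
    have h3 : (ENNReal.ofReal (4 - 0)) < ENNReal.ofReal 1 + 3 :=
      h2.trans_lt (ENNReal.add_lt_add_left ENNReal.ofReal_ne_top hlt)
    simp [ENNReal.ofReal_ofNat, ENNReal.ofReal_one] at h3
    norm_num at h3
  have hvolA : 3 ≤ volume A := key tA htAle
  have hvolB : 3 ≤ volume B := key tB htBle
  rw [Metric.tendstoUniformlyOn_iff] at hA hB
  obtain ⟨n, hnA, hnB⟩ := ((hA (ε/3) (by positivity)).and (hB (ε/3) (by positivity))).exists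
  set C := (fun r => r - s n) ⁻¹' B with hCdef
  have hmC : MeasurableSet C := hmB.preimage (measurable_id.sub measurable_const)
  have hvolC : volume C = volume B := by
    rw [hCdef]
    simp only [sub_eq_add_neg]
    exact measure_preimage_add_right volume (-(s n)) B
  have hne : (A ∩ C).Nonempty := by
    rw [Set.nonempty_iff_ne_empty]
    intro hempty
    have hdisj : Disjoint A C := Set.disjoint_iff_inter_eq_empty.mpr hempty
    have hu : volume (A ∪ C) = volume A + volume C := measure_union hdisj hmC
    have hsub : A ∪ C ⊆ Set.Icc (0:ℝ) 5 := by
      rintro r (hr | hr)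
      · exact ⟨hr.1.1, hr.1.2.trans (by norm_num)⟩
      · have h1 : r - s n ∈ Set.Icc (0:ℝ) 4 := hr.1
        have h2 := (hs n).1
        have h3 := (hs n).2
        constructor
        · linarith [h1.1]
        · linarith [h1.2]
    have h6 : (6:ENNReal) ≤ volume (A ∪ C) := by
      rw [hu, hvolC]
      calc (6:ENNReal) = 3 + 3 := by norm_num
      _ ≤ volume A + volume B := add_le_add hvolA hvolB
    have h5 : volume (A ∪ C) ≤ ENNReal.ofReal (5 - 0) := by
      rw [← Real.volume_Icc]; exact measure_mono hsub
    have := h6.trans h5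
    simp [ENNReal.ofReal_ofNat] at this
    norm_num at this
  obtain ⟨r, hrA, hrC⟩ := hne
  have e1 := hnA r hrA
  have e2 := hnB (r - s n) hrC
  rw [Real.dist_eq] at e1 e2
  have hid : k (u n + s n) - k (u n) + ρ * s n
      = (F n r - g r) - (G n (r - s n) - g (r - s n)) := by
    simp only [hF, hG, hg]
    rw [show u n + s n + (r - s n) = u n + r from by ring]
    ring
  have htri : |k (u n + s n) - k (u n) + ρ * s n|
      ≤ |F n r - g r| + |G n (r - s n) - g (r - s n)| := by
    rw [hid]; exact abs_sub _ _
  have hb1 : |F n r - g r| < ε/3 := by rwa [abs_sub_comm]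
  have hb2 : |G n (r - s n) - g (r - s n)| < ε/3 := by rwa [abs_sub_comm]
  have := hgt n
  linarith

lemma potter_step (ρ : ℝ) (f : ℝ → ℝ) (hmeas : Measurable f)
    (hpos : ∀ x : ℝ, 0 < x → 0 < f x)
    (hrv : ∀ t : ℝ, 0 < t →
      Tendsto (fun x => f (t * x) / f x) (𝓝[>] (0:ℝ)) (𝓝 (t ^ ρ)))
    (ε : ℝ) (hε : 0 < ε) (hε1 : ε < 1) :
    ∃ x₀ > 0, ∀ x : ℝ, 0 < x → x ≤ x₀ → ∀ t : ℝ, 1/2 ≤ t → t ≤ 1 →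
      (1-ε) * t^ρ * f x ≤ f (t*x) ∧ f (t*x) ≤ (1+ε) * t^ρ * f x := by
  set k : ℝ → ℝ := fun u => Real.log (f (Real.exp (-u))) with hkdef
  have hk : Measurable k :=
    Real.measurable_log.comp (hmeas.comp (Real.measurable_exp.comp measurable_neg))
  have hkt : ∀ s : ℝ, Tendsto (fun u => k (u + s) - k u) atTop (𝓝 (-(ρ * s))) := by
    intro s
    have ht : (0:ℝ) < Real.exp (-s) := Real.exp_pos _
    have hcomp : Tendsto (fun u : ℝ => Real.exp (-u)) atTop (𝓝[>] (0:ℝ)) := by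
      apply tendsto_nhdsWithin_of_tendsto_nhds_of_eventually_within
      · exact Real.tendsto_exp_atBot.comp tendsto_neg_atTop_atBot
      · exact Eventually.of_forall fun x => Real.exp_pos _
    have h1 := (hrv _ ht).comp hcomp
    have h2 := ((Real.continuousAt_log
      (ne_of_gt (Real.rpow_pos_of_pos ht ρ))).tendsto).comp h1
    have heq : (Real.log ∘ ((fun x => f (Real.exp (-s) * x) / f x) ∘ fun u => Real.exp (-u)))
        = fun u => k (u + s) - k u := by
      funext u
      have e1 : Real.exp (-s) * Real.exp (-u) = Real.exp (-(u+s)) := by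
        rw [← Real.exp_add]; ring_nf
      simp only [Function.comp_apply, hkdef, e1]
      rw [Real.log_div (ne_of_gt (hpos _ (Real.exp_pos _))) (ne_of_gt (hpos _ (Real.exp_pos _)))]
    have hval : Real.log ((Real.exp (-s)) ^ ρ) = -(ρ * s) := by
      rw [Real.log_rpow ht, Real.log_exp]; ring
    rw [heq, hval] at h2
    exact h2
  set ε₂ := Real.log (1+ε) with hε₂def
  have hε₂ : 0 < ε₂ := Real.log_pos (by linarith)
  obtain ⟨U, hU⟩ := uct k hk ρ hkt ε₂ hε₂
  refine ⟨Real.exp (-U), Real.exp_pos _, ?_⟩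
  intro x hx hxle t ht2 ht1
  have htpos : 0 < t := by linarith
  have htx : 0 < t * x := mul_pos htpos hx
  set u := -Real.log x with hudef
  set s := -Real.log t with hsdef
  have hu : u ≥ U := by
    have := Real.log_le_log hx hxle
    rw [Real.log_exp] at this
    simp only [hudef]; linarith
  have hs0 : 0 ≤ s := by
    have := Real.log_nonpos (le_of_lt htpos) ht1
    simp only [hsdef]; linarith
  have hs1 : s ≤ 1 := by
    have h2 : Real.log 2 ≤ 1 := by
      have := Real.log_le_sub_one_of_pos (by norm_num : (0:ℝ) < 2); linarith
    have hl : Real.log (1/2) ≤ Real.log t := Real.log_le_log (by norm_num) ht2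
    rw [one_div, Real.log_inv] at hl
    simp only [hsdef]; linarith
  have key := hU u hu s ⟨hs0, hs1⟩
  have hex : Real.exp (-u) = x := by rw [hudef, neg_neg, Real.exp_log hx]
  have het : Real.exp (-s) = t := by rw [hsdef, neg_neg, Real.exp_log htpos]
  have hets : Real.exp (-(u+s)) = t * x := by
    rw [neg_add, Real.exp_add, hex, het, mul_comm]
  have hku : k u = Real.log (f x) := by rw [hkdef]; simp only [hex]
  have hkus : k (u+s) = Real.log (f (t*x)) := by rw [hkdef]; simp only [hets]
  have hrs : ρ * s = -Real.log (t ^ ρ) := by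
    rw [Real.log_rpow htpos, hsdef]; ring
  rw [hku, hkus, hrs] at key
  rw [abs_le] at key
  obtain ⟨kl, ku⟩ := key
  have hfx : 0 < f x := hpos x hx
  have hftx : 0 < f (t*x) := hpos _ htx
  have htρ : 0 < t ^ ρ := Real.rpow_pos_of_pos htpos ρ
  have hup : f (t*x) ≤ (1+ε) * t^ρ * f x := by
    have h1 : Real.log (f (t*x)) ≤ ε₂ + Real.log (t^ρ) + Real.log (f x) := by linarith
    have h2 := Real.exp_le_exp.mpr h1
    rw [Real.exp_log hftx, Real.exp_add, Real.exp_add, Real.exp_log htρ, Real.exp_log hfx,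
      hε₂def, Real.exp_log (by linarith : (0:ℝ) < 1+ε)] at h2
    linarith [h2]
  have hlo : (1-ε) * t^ρ * f x ≤ f (t*x) := by
    have h1 : -ε₂ + Real.log (t^ρ) + Real.log (f x) ≤ Real.log (f (t*x)) := by linarith
    have h2 := Real.exp_le_exp.mpr h1
    rw [Real.exp_log hftx, Real.exp_add, Real.exp_add, Real.exp_log htρ, Real.exp_log hfx] at h2
    have h3 : (1-ε) ≤ Real.exp (-ε₂) := by
      rw [hε₂def, Real.exp_neg, Real.exp_log (by linarith : (0:ℝ) < 1+ε)]
      have hb : (0:ℝ) < 1+ε := by linarith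
      have : (1-ε) ≤ 1/(1+ε) := by rw [le_div_iff₀ hb]; nlinarith
      simpa [one_div] using this
    calc (1-ε) * t^ρ * f x ≤ Real.exp (-ε₂) * t^ρ * f x := by
          apply mul_le_mul_of_nonneg_right _ (le_of_lt hfx)
          exact mul_le_mul_of_nonneg_right h3 (le_of_lt htρ)
      _ ≤ f (t*x) := h2
  exact ⟨hlo, hup⟩

lemma potter (ρ : ℝ) (f : ℝ → ℝ) (hmeas : Measurable f)
    (hpos : ∀ x : ℝ, 0 < x → 0 < f x)
    (hrv : ∀ t : ℝ, 0 < t →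
      Tendsto (fun x => f (t * x) / f x) (𝓝[>] (0:ℝ)) (𝓝 (t ^ ρ)))
    (δ : ℝ) (hδ : 0 < δ) :
    ∃ x₀ > 0, ∀ x y : ℝ, 0 < y → y ≤ x → x ≤ x₀ →
      (1-δ) * (y/x)^(ρ+δ) * f x ≤ f y ∧ f y ≤ (1+δ) * (y/x)^(ρ-δ) * f x := by
  have h2δ : (1:ℝ) < (2:ℝ)^δ :=
    Real.one_lt_rpow_iff_of_pos (by norm_num) |>.mpr (Or.inl ⟨by norm_num, hδ⟩)
  have h2δ' : (2:ℝ)^(-δ) < 1 :=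
    Real.rpow_lt_one_of_one_lt_of_neg (by norm_num) (by linarith)
  have h2δ'pos : (0:ℝ) < (2:ℝ)^(-δ) := Real.rpow_pos_of_pos (by norm_num) _
  set ε := min δ (min ((2:ℝ)^δ - 1) (1 - (2:ℝ)^(-δ))) with hεdef
  have hεpos : 0 < ε := by
    apply lt_min hδ
    apply lt_min <;> linarith
  have hε1 : ε < 1 := by
    have h1 : ε ≤ 1 - (2:ℝ)^(-δ) := le_trans (min_le_right _ _) (min_le_right _ _)
    linarith
  have hεδ : ε ≤ δ := min_le_left _ _
  have hεa : 1 + ε ≤ (2:ℝ)^δ := by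
    have h1 : ε ≤ (2:ℝ)^δ - 1 :=
      (min_le_right δ _).trans (min_le_left _ _)
    linarith
  have hεb : (2:ℝ)^(-δ) ≤ 1 - ε := by
    have h1 : ε ≤ 1 - (2:ℝ)^(-δ) :=
      (min_le_right δ _).trans (min_le_right _ _)
    linarith
  obtain ⟨x₀, hx₀pos, hstep⟩ := potter_step ρ f hmeas hpos hrv ε hεpos hε1
  have main : ∀ n : ℕ, ∀ x y : ℝ, 0 < y → y ≤ x → x ≤ x₀ → x ≤ 2^n * y →
      (1-ε) * (y/x)^(ρ+δ) * f x ≤ f y ∧ f y ≤ (1+ε) * (y/x)^(ρ-δ) * f x := by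
    intro n
    induction n with
    | zero =>
      intro x y hy hyx hx0 hb
      have hxy : x = y := le_antisymm (by simpa using hb) hyx
      subst hxy
      have h1 : x/x = 1 := div_self (ne_of_gt hy)
      rw [h1, Real.one_rpow, Real.one_rpow]
      have hfx := hpos x hy
      have e1 : (1-ε) * 1 * f x ≤ 1 * f x :=
        mul_le_mul_of_nonneg_right (show (1-ε)*1 ≤ (1:ℝ) by rw [mul_one]; linarith) hfx.le
      have e2 : 1 * f x ≤ (1+ε) * 1 * f x :=
        mul_le_mul_of_nonneg_right (show (1:ℝ) ≤ (1+ε)*1 by rw [mul_one]; linarith) hfx.le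
      constructor <;> linarith
    | succ n IH =>
      intro x y hy hyx hx0 hb
      have hx : 0 < x := lt_of_lt_of_le hy hyx
      have htpos : 0 < y / x := div_pos hy hx
      by_cases hcase : x ≤ 2 * y
      · have ht1 : y / x ≤ 1 := (div_le_one hx).mpr hyx
        have ht2 : 1/2 ≤ y / x := by rw [le_div_iff₀ hx]; linarith
        obtain ⟨l, u⟩ := hstep x hx hx0 (y/x) ht2 ht1
        rw [div_mul_cancel₀ _ (ne_of_gt hx)] at l u
        have hfx := hpos x hx
        constructor
        · refine le_trans ?_ l
          have hcmp : (y/x)^(ρ+δ) ≤ (y/x)^ρ :=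
            Real.rpow_le_rpow_of_exponent_ge htpos ht1 (by linarith)
          exact mul_le_mul_of_nonneg_right
            (mul_le_mul_of_nonneg_left hcmp (by linarith)) hfx.le
        · refine le_trans u ?_
          have hcmp : (y/x)^ρ ≤ (y/x)^(ρ-δ) :=
            Real.rpow_le_rpow_of_exponent_ge htpos ht1 (by linarith)
          exact mul_le_mul_of_nonneg_right
            (mul_le_mul_of_nonneg_left hcmp (by linarith)) hfx.le
      · push_neg at hcase
        have hx2 : 0 < x/2 := by linarith
        have hyx2 : y ≤ x/2 := by linarith
        have hx20 : x/2 ≤ x₀ := by linarith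
        have hb2 : x/2 ≤ 2^n * y := by
          have hps : (2:ℝ)^(n+1) = 2^n * 2 := pow_succ 2 n
          rw [hps] at hb
          have : (2:ℝ)^n * 2 * y / 2 = 2^n * y := by ring
          linarith
        obtain ⟨IHl, IHu⟩ := IH (x/2) y hy hyx2 hx20 hb2
        obtain ⟨l2, u2⟩ := hstep x hx hx0 (1/2) (le_refl _) (by norm_num)
        rw [show (1/2 : ℝ) * x = x/2 from by ring] at l2 u2
        have hfx := hpos x hx
        have hfx2 := hpos (x/2) hx2
        have hhalf : (0:ℝ) < (1/2 : ℝ) := by norm_num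
        have hsplitU : (y/x)^(ρ-δ) = (y/(x/2))^(ρ-δ) * (1/2 : ℝ)^(ρ-δ) := by
          rw [← Real.mul_rpow (by positivity) (by norm_num)]
          congr 1; field_simp
        have hsplitL : (y/x)^(ρ+δ) = (y/(x/2))^(ρ+δ) * (1/2 : ℝ)^(ρ+δ) := by
          rw [← Real.mul_rpow (by positivity) (by norm_num)]
          congr 1; field_simp
        have hyx2pos : 0 < y/(x/2) := div_pos hy hx2
        -- key exponent comparisons
        have h12 : (1/2:ℝ)^δ = (2:ℝ)^(-δ) := by
          rw [one_div, Real.inv_rpow (by norm_num : (0:ℝ) ≤ 2), ← Real.rpow_neg (by norm_num)]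
        have h2mul : (2:ℝ)^δ * (2:ℝ)^(-δ) = 1 := by
          rw [← Real.rpow_add (by norm_num)]; simp
        have hhρ : (0:ℝ) < (1/2 : ℝ)^ρ := Real.rpow_pos_of_pos hhalf ρ
        have hkeyU : (1+ε) * (1/2:ℝ)^ρ ≤ (1/2:ℝ)^(ρ-δ) := by
          rw [Real.rpow_sub hhalf, le_div_iff₀ (Real.rpow_pos_of_pos hhalf δ), h12]
          have k1 : (1+ε) * (2:ℝ)^(-δ) ≤ 1 := by
            have h3 := mul_le_mul_of_nonneg_right hεa h2δ'pos.le
            rwa [h2mul] at h3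
          calc (1+ε)*(1/2:ℝ)^ρ*(2:ℝ)^(-δ) = ((1+ε)*(2:ℝ)^(-δ))*(1/2:ℝ)^ρ := by ring
            _ ≤ 1*(1/2:ℝ)^ρ := mul_le_mul_of_nonneg_right k1 hhρ.le
            _ = (1/2:ℝ)^ρ := one_mul _
        have hkeyL : (1/2:ℝ)^(ρ+δ) ≤ (1-ε) * (1/2:ℝ)^ρ := by
          rw [Real.rpow_add hhalf, h12, mul_comm ((1/2:ℝ)^ρ)]
          exact mul_le_mul_of_nonneg_right hεb hhρ.le
        have c2 : (1/2:ℝ)^(ρ+δ) * f x ≤ f (x/2) :=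
          (mul_le_mul_of_nonneg_right hkeyL hfx.le).trans l2
        have c1u : f (x/2) ≤ (1/2:ℝ)^(ρ-δ) * f x :=
          u2.trans (mul_le_mul_of_nonneg_right hkeyU hfx.le)
        have hcoefL : 0 ≤ (1-ε) * (y/(x/2))^(ρ+δ) :=
          mul_nonneg (by linarith) (Real.rpow_pos_of_pos hyx2pos _).le
        have hcoefU : 0 ≤ (1+ε) * (y/(x/2))^(ρ-δ) :=
          mul_nonneg (by linarith) (Real.rpow_pos_of_pos hyx2pos _).le
        constructor
        · rw [hsplitL]
          calc (1-ε) * ((y/(x/2))^(ρ+δ) * (1/2:ℝ)^(ρ+δ)) * f x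
              = (1-ε) * (y/(x/2))^(ρ+δ) * ((1/2:ℝ)^(ρ+δ) * f x) := by ring
            _ ≤ (1-ε) * (y/(x/2))^(ρ+δ) * f (x/2) :=
                mul_le_mul_of_nonneg_left c2 hcoefL
            _ ≤ f y := IHl
        · rw [hsplitU]
          calc f y ≤ (1+ε) * (y/(x/2))^(ρ-δ) * f (x/2) := IHu
            _ ≤ (1+ε) * (y/(x/2))^(ρ-δ) * ((1/2:ℝ)^(ρ-δ) * f x) :=
                mul_le_mul_of_nonneg_left c1u hcoefU
            _ = (1+ε) * ((y/(x/2))^(ρ-δ) * (1/2:ℝ)^(ρ-δ)) * f x := by ring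
  refine ⟨x₀, hx₀pos, ?_⟩
  intro x y hy hyx hx0
  have hx : 0 < x := lt_of_lt_of_le hy hyx
  obtain ⟨n, hn⟩ := pow_unbounded_of_one_lt (x/y) (one_lt_two (α := ℝ))
  have hxn : x ≤ 2^n * y := by
    rw [div_lt_iff₀ hy] at hn
    linarith
  obtain ⟨l, u⟩ := main n x y hy hyx hx0 hxn
  have hrl := Real.rpow_pos_of_pos (div_pos hy hx) (ρ+δ)
  have hru := Real.rpow_pos_of_pos (div_pos hy hx) (ρ-δ)
  have hfx := hpos x hx
  constructor
  · exact le_trans (mul_le_mul_of_nonneg_right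
      (mul_le_mul_of_nonneg_right (by linarith : (1:ℝ)-δ ≤ 1-ε) hrl.le) hfx.le) l
  · exact le_trans u (mul_le_mul_of_nonneg_right
      (mul_le_mul_of_nonneg_right (by linarith : (1:ℝ)+ε ≤ 1+δ) hru.le) hfx.le)

lemma f_tendsto_zero (ρ : ℝ) (hρ : 0 < ρ) (f : ℝ → ℝ) (hmeas : Measurable f)
    (hpos : ∀ x : ℝ, 0 < x → 0 < f x)
    (hrv : ∀ t : ℝ, 0 < t →
      Tendsto (fun x => f (t * x) / f x) (𝓝[>] (0:ℝ)) (𝓝 (t ^ ρ))) :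
    Tendsto f (𝓝[>] (0:ℝ)) (𝓝 0) := by
  obtain ⟨x₀, hx₀, hP⟩ := potter ρ f hmeas hpos hrv (ρ/2) (by linarith)
  have hq : Tendsto (fun y : ℝ => (1+ρ/2) * (y/x₀)^(ρ-ρ/2) * f x₀) (𝓝[>] (0:ℝ)) (𝓝 0) := by
    have hb : Tendsto (fun y : ℝ => y/x₀) (𝓝[>] (0:ℝ)) (𝓝 0) := by
      have : Tendsto (fun y : ℝ => y/x₀) (𝓝 (0:ℝ)) (𝓝 (0/x₀)) :=
        (continuous_id.div_const x₀).tendsto 0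
      rw [zero_div] at this
      exact this.mono_left nhdsWithin_le_nhds
    have hc : ContinuousAt (fun z : ℝ => z ^ (ρ-ρ/2)) 0 :=
      Real.continuousAt_rpow_const 0 _ (Or.inr (by linarith))
    have h2 : Tendsto (fun y : ℝ => (y/x₀)^(ρ-ρ/2)) (𝓝[>] (0:ℝ)) (𝓝 0) := by
      have := hc.tendsto.comp hb
      rwa [Real.zero_rpow (by linarith : ρ - ρ/2 ≠ 0)] at this
    have h3 := (h2.const_mul (1+ρ/2)).mul_const (f x₀)
    simpa using h3
  apply tendsto_of_tendsto_of_tendsto_of_le_of_le' tendsto_const_nhds hq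
  · filter_upwards [self_mem_nhdsWithin] with y hy
    exact (hpos y hy).le
  · filter_upwards [Ioc_mem_nhdsGT_of_mem ⟨le_refl 0, hx₀⟩] with y hy
    exact (hP x₀ y hy.1 hy.2 (le_refl _)).2

lemma rpow_sel_aux (s ρ : ℝ) (hs : 0 < s) (e : ℝ → ℝ)
    (he : Tendsto e (𝓝[>] (0:ℝ)) (𝓝 ρ)) :
    Tendsto (fun ε : ℝ => (s/(1+ε)) ^ (e ε)) (𝓝[>] (0:ℝ)) (𝓝 (s ^ ρ)) := by
  have hbase : Tendsto (fun ε : ℝ => s/(1+ε)) (𝓝[>] (0:ℝ)) (𝓝 s) := by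
    have hc : ContinuousAt (fun ε : ℝ => s/(1+ε)) 0 :=
      continuousAt_const.div (continuousAt_const.add continuousAt_id) (by norm_num)
    have h2 : Tendsto (fun ε : ℝ => s/(1+ε)) (𝓝[>] (0:ℝ)) (𝓝 (s/(1+0))) :=
      hc.tendsto.mono_left nhdsWithin_le_nhds
    simpa using h2
  have hrpow : ContinuousAt (fun p : ℝ × ℝ => p.1 ^ p.2) (s, ρ) :=
    Real.continuousAt_rpow (s, ρ) (Or.inl hs.ne')
  exact hrpow.tendsto.comp (hbase.prodMk_nhds he)

lemma rpow_sel_aux' (w ρ : ℝ) (hw : 0 < w) (e : ℝ → ℝ)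
    (he : Tendsto e (𝓝[>] (0:ℝ)) (𝓝 ρ)) :
    Tendsto (fun ε : ℝ => w ^ (e ε)) (𝓝[>] (0:ℝ)) (𝓝 (w ^ ρ)) := by
  have hrpow : ContinuousAt (fun p : ℝ × ℝ => p.1 ^ p.2) (w, ρ) :=
    Real.continuousAt_rpow (w, ρ) (Or.inl hw.ne')
  exact hrpow.tendsto.comp (tendsto_const_nhds.prodMk_nhds he)

lemma exp_sel_sub (ρ : ℝ) : Tendsto (fun ε : ℝ => ρ - ε) (𝓝[>] (0:ℝ)) (𝓝 ρ) := by
  have : Tendsto (fun ε : ℝ => ρ - ε) (𝓝 (0:ℝ)) (𝓝 (ρ - 0)) :=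
    (continuous_const.sub continuous_id).tendsto 0
  rw [sub_zero] at this
  exact this.mono_left nhdsWithin_le_nhds

lemma exp_sel_add (ρ : ℝ) : Tendsto (fun ε : ℝ => ρ + ε) (𝓝[>] (0:ℝ)) (𝓝 ρ) := by
  have : Tendsto (fun ε : ℝ => ρ + ε) (𝓝 (0:ℝ)) (𝓝 (ρ + 0)) :=
    (continuous_const.add continuous_id).tendsto 0
  rw [add_zero] at this
  exact this.mono_left nhdsWithin_le_nhds

lemma one_sub_sel : Tendsto (fun ε : ℝ => 1 - ε) (𝓝[>] (0:ℝ)) (𝓝 1) := by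
  simpa using exp_sel_sub 1

lemma one_add_sel : Tendsto (fun ε : ℝ => 1 + ε) (𝓝[>] (0:ℝ)) (𝓝 1) := by
  simpa using exp_sel_add 1

lemma finv_le_of_mem {f : ℝ → ℝ} {finv : ℝ → ℝ}
    (hfinv : ∀ x : ℝ, finv x = sInf {y : ℝ | 0 < y ∧ x < f y})
    {x y : ℝ} (hy : 0 < y) (hxy : x < f y) : finv x ≤ y := by
  rw [hfinv]
  exact csInf_le ⟨0, fun z hz => hz.1.le⟩ ⟨hy, hxy⟩

lemma f_le_of_lt_finv {f : ℝ → ℝ} {finv : ℝ → ℝ}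
    (hfinv : ∀ x : ℝ, finv x = sInf {y : ℝ | 0 < y ∧ x < f y})
    {x y : ℝ} (hy : 0 < y) (hlt : y < finv x) : f y ≤ x := by
  by_contra h
  push_neg at h
  exact absurd (finv_le_of_mem hfinv hy h) (not_le.mpr hlt)

lemma lb_le_finv {f : ℝ → ℝ} {finv : ℝ → ℝ}
    (hfinv : ∀ x : ℝ, finv x = sInf {y : ℝ | 0 < y ∧ x < f y})
    {x b : ℝ} (hne : {y : ℝ | 0 < y ∧ x < f y}.Nonempty)
    (hb : ∀ y, 0 < y → x < f y → b ≤ y) : b ≤ finv x := by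
  rw [hfinv]
  exact le_csInf hne (fun z hz => hb z hz.1 hz.2)

lemma finv_basic (ρ : ℝ) (hρ : 0 < ρ) (f : ℝ → ℝ) (hmeas : Measurable f)
    (hpos : ∀ x : ℝ, 0 < x → 0 < f x)
    (hrv : ∀ t : ℝ, 0 < t →
      Tendsto (fun x => f (t * x) / f x) (𝓝[>] (0:ℝ)) (𝓝 (t ^ ρ)))
    (finv : ℝ → ℝ) (hfinv : ∀ x : ℝ, finv x = sInf {y : ℝ | 0 < y ∧ x < f y}) :
    (∀ x : ℝ, 0 < x → {y : ℝ | 0 < y ∧ x < f y}.Nonempty → 0 < finv x) ∧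
    (∀ a : ℝ, 0 < a →
      ∀ᶠ x in 𝓝[>] (0:ℝ), finv x ≤ a ∧ {y : ℝ | 0 < y ∧ x < f y}.Nonempty) ∧
    Tendsto finv (𝓝[>] (0:ℝ)) (𝓝[>] (0:ℝ)) := by
  have hf0 := f_tendsto_zero ρ hρ f hmeas hpos hrv
  have h1 : ∀ x : ℝ, 0 < x → {y : ℝ | 0 < y ∧ x < f y}.Nonempty → 0 < finv x := by
    intro x hx hne
    have hev : ∀ᶠ y in 𝓝[>] (0:ℝ), f y < x := hf0.eventually_lt_const hx
    rw [eventually_nhdsWithin_iff] at hev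
    obtain ⟨U, hUnhds, hU⟩ := eventually_iff_exists_mem.mp hev
    obtain ⟨δ, hδpos, hδsub⟩ := Metric.mem_nhds_iff.mp hUnhds
    have hlb : ∀ y, 0 < y → x < f y → δ/2 ≤ y := by
      intro y hy hxy
      by_contra hc
      push_neg at hc
      have hyU : y ∈ U := hδsub (by
        simp only [Metric.mem_ball, Real.dist_eq, sub_zero, abs_of_pos hy]
        linarith)
      exact absurd hxy (not_lt.mpr (hU y hyU hy).le)
    have := lb_le_finv hfinv hne hlb
    linarith
  refine ⟨h1, ?_, ?_⟩
  · intro a ha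
    have hfa := hpos a ha
    filter_upwards [Ioo_mem_nhdsGT_of_mem ⟨le_refl (0:ℝ), hfa⟩] with x hx
    have hmem : a ∈ {y : ℝ | 0 < y ∧ x < f y} := ⟨ha, hx.2⟩
    exact ⟨finv_le_of_mem hfinv ha hx.2, ⟨a, hmem⟩⟩
  · have hevpos : ∀ᶠ x in 𝓝[>] (0:ℝ), 0 < finv x := by
      have hf1 := hpos 1 one_pos
      filter_upwards [Ioo_mem_nhdsGT_of_mem ⟨le_refl (0:ℝ), hf1⟩] with x hx
      exact h1 x hx.1 ⟨1, one_pos, hx.2⟩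
    rw [tendsto_nhdsWithin_iff]
    constructor
    · rw [tendsto_order]
      constructor
      · intro a' ha'
        filter_upwards [hevpos] with x hx
        exact lt_trans ha' hx
      · intro a ha
        have hfa2 := hpos (a/2) (by linarith)
        filter_upwards [Ioo_mem_nhdsGT_of_mem ⟨le_refl (0:ℝ), hfa2⟩] with x hx
        have := finv_le_of_mem hfinv (by linarith : (0:ℝ) < a/2) hx.2
        linarith
    · exact hevpos

lemma goal_b (ρ : ℝ) (hρ : 0 < ρ) (f : ℝ → ℝ) (hmeas : Measurable f)
    (hpos : ∀ x : ℝ, 0 < x → 0 < f x)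
    (hrv : ∀ t : ℝ, 0 < t →
      Tendsto (fun x => f (t * x) / f x) (𝓝[>] (0:ℝ)) (𝓝 (t ^ ρ)))
    (finv : ℝ → ℝ) (hfinv : ∀ x : ℝ, finv x = sInf {y : ℝ | 0 < y ∧ x < f y}) :
    Tendsto (fun x => f (finv x) / x) (𝓝[>] (0:ℝ)) (𝓝 1) := by
  obtain ⟨hfp, hev, hftend⟩ := finv_basic ρ hρ f hmeas hpos hrv finv hfinv
  have hevpos : ∀ᶠ x in 𝓝[>] (0:ℝ), 0 < finv x :=
    hftend.eventually eventually_mem_nhdsWithin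
  rw [tendsto_order]
  constructor
  · intro p hp
    rcases le_or_gt p 0 with hp0 | hp0
    · filter_upwards [hevpos, self_mem_nhdsWithin] with x h1 h2
      exact lt_of_le_of_lt hp0 (div_pos (hpos _ h1) h2)
    · set c := Real.sqrt p with hc
      have hcpos : 0 < c := Real.sqrt_pos.mpr hp0
      have hc1 : c < 1 := by
        rw [hc, Real.sqrt_lt' one_pos]
        nlinarith
      have hcc : c * c = p := Real.mul_self_sqrt hp0.le
      set δ := min (1 - c) (min (ρ/2) (1/2)) with hδdef
      have hδpos : 0 < δ := lt_min (by linarith) (lt_min (by linarith) (by norm_num))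
      have hδc : c ≤ 1 - δ := by
        have := min_le_left (1 - c) (min (ρ/2) (1/2)); linarith
      have hδ2 : δ ≤ 1/2 := le_trans (min_le_right _ _) (min_le_right _ _)
      have hρδ : 0 < ρ + δ := by linarith
      set lam := c ^ (-(ρ+δ)⁻¹) with hlamdef
      have hlampos : 0 < lam := Real.rpow_pos_of_pos hcpos _
      have hlam1 : 1 < lam :=
        (Real.one_lt_rpow_iff_of_pos hcpos).mpr
          (Or.inr ⟨hc1, by rw [neg_lt, neg_zero]; positivity⟩)
      have hlamρδ : lam ^ (ρ+δ) = c⁻¹ := by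
        rw [hlamdef, ← Real.rpow_mul hcpos.le,
          show -(ρ+δ)⁻¹*(ρ+δ) = -1 from by field_simp, Real.rpow_neg_one]
      obtain ⟨x₀, hx₀, hP⟩ := potter ρ f hmeas hpos hrv δ hδpos
      filter_upwards [hev (x₀/lam) (by positivity), self_mem_nhdsWithin, hevpos]
        with x hx1 hxpos hupos
      set u := finv x with hudef
      have hsne := hx1.2
      have hsinf : sInf {y : ℝ | 0 < y ∧ x < f y} < lam * u := by
        rw [← hfinv x, ← hudef]; nlinarith
      obtain ⟨y, hymem, hylt⟩ := exists_lt_of_csInf_lt hsne hsinf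
      have hypos : 0 < y := hymem.1
      have hyu : u ≤ y := by
        rw [hudef, hfinv x]
        exact csInf_le ⟨0, fun z hz => hz.1.le⟩ hymem
      have hyx₀ : y ≤ x₀ := by
        have h2 : lam * u ≤ x₀ := by
          rw [mul_comm]
          exact (le_div_iff₀ hlampos).mp hx1.1
        linarith
      obtain ⟨hl, -⟩ := hP y u hupos hyu hyx₀
      have hratio : lam⁻¹ ≤ u/y := by
        rw [le_div_iff₀ hypos]
        have h3 := mul_le_mul_of_nonneg_left hylt.le (inv_nonneg.mpr hlampos.le)
        rwa [inv_mul_cancel_left₀ (ne_of_gt hlampos)] at h3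
      have hcmp : c ≤ (u/y)^(ρ+δ) := by
        have h1 : (lam⁻¹)^(ρ+δ) ≤ (u/y)^(ρ+δ) :=
          Real.rpow_le_rpow (by positivity) hratio hρδ.le
        rwa [Real.inv_rpow hlampos.le, hlamρδ, inv_inv] at h1
      have hfypos : 0 < f y := hpos y hypos
      rw [lt_div_iff₀ hxpos]
      have h2 : c * c * f y ≤ (1-δ)*(u/y)^(ρ+δ)*f y :=
        mul_le_mul_of_nonneg_right (mul_le_mul hδc hcmp hcpos.le (by linarith)) hfypos.le
      have h3 : p * x < p * f y := mul_lt_mul_of_pos_left hymem.2 hp0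
      have h4 : p * f y = c * c * f y := by rw [hcc]
      linarith
  · intro q hq
    set c := Real.sqrt ((1+q)/2) with hcdef
    have hq2 : 1 < (1+q)/2 := by linarith
    have hcq : c*c = (1+q)/2 := Real.mul_self_sqrt (by linarith)
    have hc1 : 1 < c := by
      rw [hcdef, Real.lt_sqrt one_pos.le]
      nlinarith
    have hcpos : 0 < c := by linarith
    have hccq : c*c < q := by rw [hcq]; linarith
    have hcinv1 : c⁻¹ < 1 := by
      rw [inv_lt_one_iff₀]; right; exact hc1
    have hcinvpos : 0 < c⁻¹ := by positivity
    set δ := min (1 - c⁻¹) (min (ρ/2) (1/2)) with hδdef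
    have hδpos : 0 < δ := lt_min (by linarith) (lt_min (by linarith) (by norm_num))
    have hδc : c⁻¹ ≤ 1 - δ := by
      have := min_le_left (1 - c⁻¹) (min (ρ/2) (1/2)); linarith
    have hδ2 : δ ≤ 1/2 := le_trans (min_le_right _ _) (min_le_right _ _)
    have hρδ : 0 < ρ + δ := by linarith
    set μ := c ^ (-(ρ+δ)⁻¹) with hμdef
    have hμpos : 0 < μ := Real.rpow_pos_of_pos hcpos _
    have hμ1 : μ < 1 :=
      Real.rpow_lt_one_of_one_lt_of_neg hc1 (by rw [neg_lt, neg_zero]; positivity)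
    have hμρδ : μ ^ (ρ+δ) = c⁻¹ := by
      rw [hμdef, ← Real.rpow_mul hcpos.le,
        show -(ρ+δ)⁻¹*(ρ+δ) = -1 from by field_simp, Real.rpow_neg_one]
    obtain ⟨x₀, hx₀, hP⟩ := potter ρ f hmeas hpos hrv δ hδpos
    filter_upwards [hev x₀ hx₀, self_mem_nhdsWithin, hevpos] with x hx1 hxpos hupos
    set u := finv x with hudef
    have hμu : μ*u < u := by nlinarith
    have hμupos : 0 < μ*u := by positivity
    have hfle : f (μ*u) ≤ x := f_le_of_lt_finv hfinv hμupos hμu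
    obtain ⟨hl, -⟩ := hP u (μ*u) hμupos hμu.le hx1.1
    have hμdiv : (μ*u)/u = μ := by field_simp
    rw [hμdiv, hμρδ] at hl
    have hfupos : 0 < f u := hpos u hupos
    have h1 : (1-δ)*c⁻¹*f u ≤ x := le_trans hl hfle
    have h2 : c⁻¹*c⁻¹*f u ≤ (1-δ)*c⁻¹*f u :=
      mul_le_mul_of_nonneg_right (mul_le_mul_of_nonneg_right hδc hcinvpos.le) hfupos.le
    have h3 : c⁻¹*c⁻¹*f u ≤ x := le_trans h2 h1
    have h4 := mul_le_mul_of_nonneg_left h3 (by positivity : (0:ℝ) ≤ c*c)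
    have h5 : c*c*(c⁻¹*c⁻¹*f u) = f u := by
      field_simp
    rw [h5] at h4
    rw [div_lt_iff₀ hxpos]
    calc f u ≤ c*c*x := h4
      _ < q*x := mul_lt_mul_of_pos_right hccq hxpos

lemma goal_c (ρ : ℝ) (hρ : 0 < ρ) (f : ℝ → ℝ) (hmeas : Measurable f)
    (hpos : ∀ x : ℝ, 0 < x → 0 < f x)
    (hrv : ∀ t : ℝ, 0 < t →
      Tendsto (fun x => f (t * x) / f x) (𝓝[>] (0:ℝ)) (𝓝 (t ^ ρ)))
    (finv : ℝ → ℝ) (hfinv : ∀ x : ℝ, finv x = sInf {y : ℝ | 0 < y ∧ x < f y}) :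
    Tendsto (fun x => finv (f x) / x) (𝓝[>] (0:ℝ)) (𝓝 1) := by
  obtain ⟨hfp, hev, hftend⟩ := finv_basic ρ hρ f hmeas hpos hrv finv hfinv
  have hCup : ∀ lam : ℝ, 1 < lam → ∀ᶠ x in 𝓝[>] (0:ℝ),
      finv (f x) ≤ lam * x ∧ (lam * x) ∈ {y : ℝ | 0 < y ∧ f x < f y} := by
    intro lam hlam
    have hlam0 : (0:ℝ) < lam := by linarith
    have hρlam : (1:ℝ) < lam ^ ρ :=
      (Real.one_lt_rpow_iff_of_pos hlam0).mpr (Or.inl ⟨hlam, hρ⟩)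
    have hev1 : ∀ᶠ x in 𝓝[>] (0:ℝ), 1 < f (lam * x) / f x :=
      (hrv lam hlam0).eventually (eventually_gt_nhds hρlam)
    filter_upwards [hev1, self_mem_nhdsWithin] with x h1 hx
    have hx0 : (0:ℝ) < x := hx
    have hfx : 0 < f x := hpos x hx
    have h2 : f x < f (lam * x) := by
      rw [← one_mul (f x)]
      exact (lt_div_iff₀ hfx).mp h1
    have hmem : (lam * x) ∈ {y : ℝ | 0 < y ∧ f x < f y} := ⟨by positivity, h2⟩
    exact ⟨finv_le_of_mem hfinv (by positivity) h2, hmem⟩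
  rw [tendsto_order]
  constructor
  · intro p hp
    rcases le_or_gt p 0 with hp0 | hp0
    · filter_upwards [hCup 2 one_lt_two, self_mem_nhdsWithin] with x h1 hx
      have := hfp (f x) (hpos x hx) ⟨2*x, h1.2⟩
      exact lt_of_le_of_lt hp0 (div_pos this hx)
    · set μ := (1+p)/2 with hμdef
      have hμp : p < μ := by rw [hμdef]; linarith
      have hμ1 : μ < 1 := by rw [hμdef]; linarith
      have hμpos : 0 < μ := by rw [hμdef]; linarith
      have hμρ1 : μ ^ ρ < 1 := Real.rpow_lt_one hμpos.le hμ1 hρ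
      have htend : Tendsto (fun ε : ℝ => (1+ε) * μ^(ρ-ε)) (𝓝[>] (0:ℝ)) (𝓝 (μ^ρ)) := by
        have := one_add_sel.mul (rpow_sel_aux' μ ρ hμpos _ (exp_sel_sub ρ))
        simpa using this
      have hminpos : 0 < min (ρ/2) (1/2) := lt_min (by linarith) (by norm_num)
      have hsel : ∀ᶠ ε in 𝓝[>] (0:ℝ),
          ((1+ε) * μ^(ρ-ε) < 1 ∧ ε ∈ Set.Ioo (0:ℝ) (min (ρ/2) (1/2))) :=
        (htend.eventually (eventually_lt_nhds hμρ1)).and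
          (eventually_of_mem (Ioo_mem_nhdsGT_of_mem ⟨le_refl 0, hminpos⟩) (fun ε hε => hε))
      obtain ⟨δ, hδlt, hδmem⟩ := hsel.exists
      have hδpos : 0 < δ := hδmem.1
      have hδρ : δ < ρ/2 := lt_of_lt_of_le hδmem.2 (min_le_left _ _)
      have hρδ : 0 < ρ - δ := by linarith
      obtain ⟨x₀, hx₀, hP⟩ := potter ρ f hmeas hpos hrv δ hδpos
      filter_upwards [Ioc_mem_nhdsGT_of_mem ⟨le_refl (0:ℝ), hx₀⟩, hCup 2 one_lt_two]
        with x hx h2up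
      have hx0 : 0 < x := hx.1
      have hfx : 0 < f x := hpos x hx0
      have hlb : ∀ y, 0 < y → f x < f y → μ * x ≤ y := by
        intro y hy hfxy
        by_contra hcon
        push_neg at hcon
        have hyx : y ≤ x := by nlinarith
        obtain ⟨-, hu⟩ := hP x y hy hyx hx.2
        have hyxμ : y / x ≤ μ := by
          rw [div_le_iff₀ hx0]; nlinarith
        have hcmp : (y/x)^(ρ-δ) ≤ μ^(ρ-δ) :=
          Real.rpow_le_rpow (by positivity) hyxμ hρδ.le
        have h3 : f y ≤ (1+δ) * μ^(ρ-δ) * f x :=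
          hu.trans (mul_le_mul_of_nonneg_right
            (mul_le_mul_of_nonneg_left hcmp (by linarith)) hfx.le)
        have h4 : (1+δ) * μ^(ρ-δ) * f x < 1 * f x :=
          mul_lt_mul_of_pos_right hδlt hfx
        rw [one_mul] at h4
        linarith
      have hge : μ * x ≤ finv (f x) :=
        lb_le_finv hfinv ⟨2*x, h2up.2⟩ hlb
      rw [lt_div_iff₀ hx0]
      have : p * x < μ * x := mul_lt_mul_of_pos_right hμp hx0
      linarith
  · intro q hq
    set lam := (1+q)/2 with hlamdef
    have hlam1 : 1 < lam := by rw [hlamdef]; linarith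
    have hlamq : lam < q := by rw [hlamdef]; linarith
    filter_upwards [hCup lam hlam1, self_mem_nhdsWithin] with x h1 hx
    have hx0 : (0:ℝ) < x := hx
    rw [div_lt_iff₀ hx0]
    have : lam * x < q * x := mul_lt_mul_of_pos_right hlamq hx0
    linarith [h1.1]

set_option maxHeartbeats 1000000 in
lemma goal_a (ρ : ℝ) (hρ : 0 < ρ) (f : ℝ → ℝ) (hmeas : Measurable f)
    (hpos : ∀ x : ℝ, 0 < x → 0 < f x)
    (hrv : ∀ t : ℝ, 0 < t →
      Tendsto (fun x => f (t * x) / f x) (𝓝[>] (0:ℝ)) (𝓝 (t ^ ρ)))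
    (finv : ℝ → ℝ) (hfinv : ∀ x : ℝ, finv x = sInf {y : ℝ | 0 < y ∧ x < f y})
    (t : ℝ) (ht : 0 < t) :
    Tendsto (fun x => finv (t * x) / finv x) (𝓝[>] (0:ℝ)) (𝓝 (t ^ (1/ρ))) := by
  obtain ⟨hfp, hev, hftend⟩ := finv_basic ρ hρ f hmeas hpos hrv finv hfinv
  have hevpos : ∀ᶠ x in 𝓝[>] (0:ℝ), 0 < finv x :=
    hftend.eventually eventually_mem_nhdsWithin
  have htx : Tendsto (fun x : ℝ => t*x) (𝓝[>] (0:ℝ)) (𝓝[>] (0:ℝ)) := by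
    apply tendsto_nhdsWithin_of_tendsto_nhds_of_eventually_within
    · have hc : Tendsto (fun x : ℝ => t*x) (𝓝 (0:ℝ)) (𝓝 (t*0)) :=
        (continuous_const.mul continuous_id).tendsto 0
      rw [mul_zero] at hc
      exact hc.mono_left nhdsWithin_le_nhds
    · filter_upwards [self_mem_nhdsWithin] with x hx
      exact mul_pos ht hx
  set L := t ^ (1/ρ) with hLdef
  have hL : 0 < L := Real.rpow_pos_of_pos ht _
  have hLρ : L ^ ρ = t := by
    rw [hLdef, ← Real.rpow_mul ht.le, one_div, inv_mul_cancel₀ hρ.ne', Real.rpow_one]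
  rw [tendsto_order]
  constructor
  · intro p hp
    rcases le_or_gt p 0 with hp0 | hp0
    · filter_upwards [hevpos, htx.eventually hevpos] with x h1 h2
      exact lt_of_le_of_lt hp0 (div_pos h2 h1)
    · -- lower bound branch
      set μ₀ := (p + L)/2 with hμ₀def
      have hμ₀p : p < μ₀ := by rw [hμ₀def]; linarith
      have hμ₀L : μ₀ < L := by rw [hμ₀def]; linarith
      have hμ₀pos : 0 < μ₀ := by rw [hμ₀def]; linarith
      set ν := (μ₀/L + 1)/2 with hνdef
      have hμ₀Lr : μ₀/L < 1 := (div_lt_one hL).mpr hμ₀L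
      have hν1 : ν < 1 := by rw [hνdef]; linarith
      have hνgt : μ₀/L < ν := by rw [hνdef]; linarith
      have hνpos : 0 < ν := by
        rw [hνdef]; have : 0 < μ₀/L := div_pos hμ₀pos hL; linarith
      set w := μ₀/ν with hwdef
      have hwpos : 0 < w := div_pos hμ₀pos hνpos
      have hwL : w < L := by
        rw [hwdef, div_lt_iff₀ hνpos]
        calc μ₀ = (μ₀/L)*L := by field_simp
          _ < ν*L := mul_lt_mul_of_pos_right hνgt hL
          _ = L*ν := mul_comm _ _
      have hwρ : w^ρ < t := by
        rw [← hLρ]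
        exact Real.rpow_lt_rpow hwpos.le hwL hρ
      clear_value L μ₀ ν w
      have htendE : Tendsto (fun ε : ℝ => max (w^(ρ-ε)) (w^(ρ+ε))) (𝓝[>] (0:ℝ))
          (𝓝 (w^ρ)) := by
        have := (rpow_sel_aux' w ρ hwpos _ (exp_sel_sub ρ)).max
          (rpow_sel_aux' w ρ hwpos _ (exp_sel_add ρ))
        simpa using this
      have htendT : Tendsto (fun ε : ℝ => t*(1-ε)) (𝓝[>] (0:ℝ)) (𝓝 t) := by
        have := one_sub_sel.const_mul t
        simpa using this
      have hminpos : 0 < min (ρ/2) (1/2) := lt_min (by linarith) (by norm_num)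
      have hsel : ∀ᶠ ε in 𝓝[>] (0:ℝ),
          (max (w^(ρ-ε)) (w^(ρ+ε)) < t*(1-ε) ∧ ε ∈ Set.Ioo (0:ℝ) (min (ρ/2) (1/2))) :=
        (htendE.eventually_lt htendT hwρ).and
          (eventually_of_mem (Ioo_mem_nhdsGT_of_mem ⟨le_refl 0, hminpos⟩) (fun ε hε => hε))
      obtain ⟨δ, hE, hδmem⟩ := hsel.exists
      have hδpos : 0 < δ := hδmem.1
      have hδρ : δ < ρ/2 := lt_of_lt_of_le hδmem.2 (min_le_left _ _)
      have hδ2 : δ < 1/2 := lt_of_lt_of_le hδmem.2 (min_le_right _ _)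
      have hρδ : 0 < ρ - δ := by linarith
      have h1δ : 0 < 1 - δ := by linarith
      obtain ⟨x₀, hx₀, hP⟩ := potter ρ f hmeas hpos hrv δ hδpos
      filter_upwards [hev (x₀/(1+μ₀)) (by positivity), hevpos, self_mem_nhdsWithin,
        htx.eventually (hev 1 one_pos)] with x hx1 hupos hxpos htxne
      set u := finv x with hudef
      clear_value u
      have hux₀ : (1+μ₀)*u ≤ x₀ := by
        rw [mul_comm]
        exact (le_div_iff₀ (by positivity)).mp hx1.1
      have hexp1 : (1+μ₀)*u = u + μ₀*u := by ring
      have hμ₀u : 0 < μ₀*u := mul_pos hμ₀pos hupos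
      have hu0 : u ≤ x₀ := by linarith
      have hμu0 : μ₀*u ≤ x₀ := by linarith
      have hb : ν*u < u := by
        have hexp2 : (1-ν)*u = u - ν*u := by ring
        have := mul_pos (by linarith : (0:ℝ) < 1-ν) hupos
        linarith
      have hbpos : 0 < ν*u := by positivity
      have hfb : f (ν*u) ≤ x :=
        f_le_of_lt_finv hfinv hbpos (by rw [← hudef]; exact hb)
      have hwb : w*(ν*u) = μ₀*u := by
        rw [hwdef]; field_simp
      have hlb : ∀ y, 0 < y → t*x < f y → μ₀*u ≤ y := by
        intro y hy hfy
        by_contra hcon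
        push_neg at hcon
        have hνux₀ : ν*u ≤ x₀ := by linarith
        have hfypos : 0 < f y := hpos y hy
        have hx0 : (0:ℝ) < x := hxpos
        rcases le_or_gt y (ν*u) with hcase | hcase
        · obtain ⟨-, hub⟩ := hP (ν*u) y hy hcase hνux₀
          have hyb : y/(ν*u) ≤ w := by
            rw [div_le_iff₀ hbpos, hwb]; linarith
          have hr : (y/(ν*u))^(ρ-δ) ≤ w^(ρ-δ) :=
            Real.rpow_le_rpow (by positivity) hyb hρδ.le
          have hEw : w^(ρ-δ) ≤ max (w^(ρ-δ)) (w^(ρ+δ)) := le_max_left _ _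
          have h3 : f y ≤ (1+δ) * w^(ρ-δ) * x := by
            have h3a := hub.trans (mul_le_mul_of_nonneg_right
              (mul_le_mul_of_nonneg_left hr (by linarith)) (hpos _ hbpos).le)
            have h4 := mul_le_mul_of_nonneg_left hfb
              (by positivity : (0:ℝ) ≤ (1+δ) * w^(ρ-δ))
            calc f y ≤ (1+δ) * w^(ρ-δ) * f (ν*u) := h3a
              _ ≤ (1+δ) * w^(ρ-δ) * x := by
                  have : (1+δ) * w^(ρ-δ) * f (ν*u) = (1+δ) * w^(ρ-δ) * (f (ν*u)) := rfl
                  linarith [h4]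
          have h5 : w^(ρ-δ) < t*(1-δ) := lt_of_le_of_lt hEw hE
          have e1 : (1+δ)*w^(ρ-δ) < (1+δ)*(t*(1-δ)) :=
            mul_lt_mul_of_pos_left h5 (by linarith)
          have e2 : (1+δ)*(t*(1-δ)) ≤ t := by
            have g1 : (1+δ)*(t*(1-δ)) = t*(1-δ^2) := by ring
            have g2 : (1:ℝ)-δ^2 ≤ 1 := by
              have := sq_nonneg δ
              linarith
            have g3 : t*(1-δ^2) ≤ t*1 := mul_le_mul_of_nonneg_left g2 ht.le
            rw [g1]
            rw [mul_one] at g3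
            exact g3
          have h6 : (1+δ) * w^(ρ-δ) * x < t * x :=
            mul_lt_mul_of_pos_right (e1.trans_le e2) hx0
          linarith
        · have hyx₀ : y ≤ x₀ := by linarith
          obtain ⟨hlb', -⟩ := hP y (ν*u) hbpos hcase.le hyx₀
          have hkey : 1 ≤ w^(ρ+δ) * ((ν*u)/y)^(ρ+δ) := by
            rw [← Real.mul_rpow hwpos.le (by positivity)]
            apply Real.one_le_rpow _ (by linarith)
            rw [mul_div_assoc', hwb, le_div_iff₀ hy, one_mul]
            linarith
          set a := ((ν*u)/y)^(ρ+δ) with hadef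
          have hapos : 0 < a := Real.rpow_pos_of_pos (by positivity) _
          have e1 : (1-δ)*a*(t*x) < (1-δ)*a*f y :=
            mul_lt_mul_of_pos_left hfy (mul_pos h1δ hapos)
          have e2 : (1-δ)*a*f y ≤ x := hlb'.trans hfb
          have e3 : w^(ρ+δ) < t*(1-δ) := lt_of_le_of_lt (le_max_right _ _) hE
          have e5 : w^(ρ+δ)*a < (t*(1-δ))*a := mul_lt_mul_of_pos_right e3 hapos
          have e6 : 1 < t*(1-δ)*a := by
            have := hkey.trans_lt e5
            linarith
          have e7 : (t*(1-δ)*a)*x < x := by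
            have heq : (t*(1-δ)*a)*x = (1-δ)*a*(t*x) := by ring
            rw [heq]
            exact e1.trans_le e2
          have e8 : x < (t*(1-δ)*a)*x := by
            have := mul_lt_mul_of_pos_right e6 hx0
            linarith
          linarith
      have hge : μ₀*u ≤ finv (t*x) := lb_le_finv hfinv htxne.2 hlb
      rw [lt_div_iff₀ hupos]
      have := mul_lt_mul_of_pos_right hμ₀p hupos
      linarith
  · intro q hq
    set s := (L+q)/2 with hsdef
    have hLs : L < s := by rw [hsdef]; linarith
    have hsq : s < q := by rw [hsdef]; linarith
    have hspos : 0 < s := by linarith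
    clear_value s
    have hsρ : t < s^ρ := by
      rw [← hLρ]
      exact Real.rpow_lt_rpow hL.le hLs hρ
    have htendW : Tendsto (fun ε : ℝ => (1-ε) * min ((s/(1+ε))^(ρ-ε)) ((s/(1+ε))^(ρ+ε)))
        (𝓝[>] (0:ℝ)) (𝓝 (s^ρ)) := by
      have hm := (rpow_sel_aux s ρ hspos _ (exp_sel_sub ρ)).min
        (rpow_sel_aux s ρ hspos _ (exp_sel_add ρ))
      have := one_sub_sel.mul hm
      simpa using this
    have hminpos : 0 < min (ρ/2) (1/2) := lt_min (by linarith) (by norm_num)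
    have hsel : ∀ᶠ ε in 𝓝[>] (0:ℝ),
        (t < (1-ε) * min ((s/(1+ε))^(ρ-ε)) ((s/(1+ε))^(ρ+ε)) ∧
          ε ∈ Set.Ioo (0:ℝ) (min (ρ/2) (1/2))) :=
      (htendW.eventually (eventually_gt_nhds hsρ)).and
        (eventually_of_mem (Ioo_mem_nhdsGT_of_mem ⟨le_refl 0, hminpos⟩) (fun ε hε => hε))
    obtain ⟨ε, hWt, hεmem⟩ := hsel.exists
    have hεpos : 0 < ε := hεmem.1
    have hερ : ε < ρ/2 := lt_of_lt_of_le hεmem.2 (min_le_left _ _)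
    have hε2 : ε < 1/2 := lt_of_lt_of_le hεmem.2 (min_le_right _ _)
    have hρε : 0 < ρ - ε := by linarith
    have h1ε : 0 < 1 - ε := by linarith
    have h1εp : (0:ℝ) < 1 + ε := by linarith
    set W := (1-ε) * min ((s/(1+ε))^(ρ-ε)) ((s/(1+ε))^(ρ+ε)) with hWdef
    have hWpos : 0 < W := lt_trans ht hWt
    obtain ⟨x₀, hx₀, hP⟩ := potter ρ f hmeas hpos hrv ε hεpos
    filter_upwards [hev (x₀/(1+ε+s)) (by positivity), hevpos, self_mem_nhdsWithin]
      with x hx1 hupos hxpos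
    have hx0 : (0:ℝ) < x := hxpos
    set u := finv x with hudef
    clear_value u
    have hsum : (1+ε+s)*u ≤ x₀ := by
      rw [mul_comm]
      exact (le_div_iff₀ (by positivity)).mp hx1.1
    have hsu0 : 0 < s*u := mul_pos hspos hupos
    have hlu0 : 0 < (1+ε)*u := mul_pos h1εp hupos
    have hexp : (1+ε+s)*u = (1+ε)*u + s*u := by ring
    have hlamu : (1+ε)*u ≤ x₀ := by linarith
    have hsux₀ : s*u ≤ x₀ := by linarith
    have hsinf : sInf {y : ℝ | 0 < y ∧ x < f y} < (1+ε)*u := by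
      rw [← hfinv x, ← hudef]
      have hεu : 0 < ε*u := mul_pos hεpos hupos
      have : (1+ε)*u = u + ε*u := by ring
      linarith
    obtain ⟨y, hymem, hylt⟩ := exists_lt_of_csInf_lt hx1.2 hsinf
    have hypos : 0 < y := hymem.1
    have hfy : x < f y := hymem.2
    have hfypos : 0 < f y := hpos y hypos
    have hyu : u ≤ y := by
      rw [hudef, hfinv x]
      exact csInf_le ⟨0, fun z hz => hz.1.le⟩ hymem
    have hy0 : y ≤ x₀ := by linarith
    have hfsupos : 0 < f (s*u) := hpos _ hsu0
    have key : t*x < f (s*u) := by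
      rcases le_or_gt y (s*u) with hcase | hcase
      · obtain ⟨-, hub⟩ := hP (s*u) y hypos hcase hsux₀
        set A := (s/(1+ε))^(ρ-ε) with hAdef
        have hA0 : 0 < A := Real.rpow_pos_of_pos (by positivity) _
        have hA : (1+ε)*t < A := by
          have h1 : t < (1-ε)*A := by
            refine lt_of_lt_of_le hWt ?_
            rw [hWdef]
            exact mul_le_mul_of_nonneg_left (min_le_left _ _) h1ε.le
          have h2 : (1+ε)*t < (1+ε)*((1-ε)*A) := mul_lt_mul_of_pos_left h1 h1εp
          have h3 : (1+ε)*((1-ε)*A) = (1-ε^2)*A := by ring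
          have h4 : (1-ε^2)*A ≤ 1*A :=
            mul_le_mul_of_nonneg_right (by have := sq_nonneg ε; linarith) hA0.le
          rw [one_mul] at h4
          linarith
        have hrat : y/(s*u) ≤ (1+ε)/s := by
          rw [div_le_div_iff₀ hsu0 hspos]
          have h5 := mul_lt_mul_of_pos_right hylt hspos
          have h6 : ((1+ε)*u)*s = (1+ε)*(s*u) := by ring
          linarith
        have hr : (y/(s*u))^(ρ-ε) ≤ A⁻¹ := by
          have h7 := Real.rpow_le_rpow (div_nonneg hypos.le hsu0.le) hrat hρε.le
          rwa [show ((1+ε)/s : ℝ) = (s/(1+ε))⁻¹ from by rw [inv_div],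
            Real.inv_rpow (by positivity), ← hAdef] at h7
        have hub2 : f y ≤ (1+ε)*A⁻¹*f (s*u) :=
          hub.trans (mul_le_mul_of_nonneg_right
            (mul_le_mul_of_nonneg_left hr (by linarith)) hfsupos.le)
        have c1 : x < (1+ε)*A⁻¹*f (s*u) := lt_of_lt_of_le hfy hub2
        have c2 : t*x < t*((1+ε)*A⁻¹*f (s*u)) := mul_lt_mul_of_pos_left c1 ht
        have c3 : t*((1+ε)*A⁻¹*f (s*u)) = ((1+ε)*t)*(A⁻¹*f (s*u)) := by ring
        have c4 : ((1+ε)*t)*(A⁻¹*f (s*u)) < A*(A⁻¹*f (s*u)) :=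
          mul_lt_mul_of_pos_right hA (mul_pos (inv_pos.mpr hA0) hfsupos)
        have c5 : A*(A⁻¹*f (s*u)) = f (s*u) := by
          field_simp
        linarith
      · obtain ⟨hlb', -⟩ := hP y (s*u) hsu0 hcase.le hy0
        have hrat : s/(1+ε) ≤ (s*u)/y := by
          rw [div_le_div_iff₀ h1εp hypos]
          have h5 := mul_lt_mul_of_pos_left hylt hspos
          have h6 : s*((1+ε)*u) = (s*u)*(1+ε) := by ring
          linarith
        have hr : (s/(1+ε))^(ρ+ε) ≤ ((s*u)/y)^(ρ+ε) :=
          Real.rpow_le_rpow (by positivity) hrat (by linarith)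
        have hW2 : W ≤ (1-ε)*((s*u)/y)^(ρ+ε) := by
          rw [hWdef]
          exact le_trans (mul_le_mul_of_nonneg_left (min_le_right _ _) h1ε.le)
            (mul_le_mul_of_nonneg_left hr h1ε.le)
        have c1 : W*f y ≤ f (s*u) :=
          le_trans (mul_le_mul_of_nonneg_right hW2 hfypos.le) hlb'
        have c2 : t*x < W*x := mul_lt_mul_of_pos_right hWt hxpos
        have c3 : W*x < W*f y := mul_lt_mul_of_pos_left hfy hWpos
        linarith
    have hle : finv (t*x) ≤ s*u := finv_le_of_mem hfinv hsu0 key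
    rw [div_lt_iff₀ hupos]
    have := mul_lt_mul_of_pos_right hsq hupos
    linarith

end RegVarAux

/-- If `f : (0,∞) → (0,∞)` is Borel and regularly varying at `0` with index
`ρ > 0`, then its generalized inverse `f^←(x) = inf{y > 0 : f(y) > x}` is regularly varying at
`0` with index `1/ρ` and is an asymptotic inverse of `f` at `0`. -/
theorem regvar_at_zero_asymptotic_inverse (ρ : ℝ) (hρ : 0 < ρ)
    (f : ℝ → ℝ) (hmeas : Measurable f) (hpos : ∀ x : ℝ, 0 < x → 0 < f x)
    (hrv : ∀ t : ℝ, 0 < t →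
      Tendsto (fun x => f (t * x) / f x) (𝓝[>] (0:ℝ)) (𝓝 (t ^ ρ)))
    (finv : ℝ → ℝ) (hfinv : ∀ x : ℝ, finv x = sInf {y : ℝ | 0 < y ∧ x < f y}) :
    (∀ t : ℝ, 0 < t →
        Tendsto (fun x => finv (t * x) / finv x) (𝓝[>] (0:ℝ)) (𝓝 (t ^ (1 / ρ)))) ∧
      Tendsto (fun x => f (finv x) / x) (𝓝[>] (0:ℝ)) (𝓝 1) ∧
      Tendsto (fun x => finv (f x) / x) (𝓝[>] (0:ℝ)) (𝓝 1) := by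
  exact ⟨fun t ht => goal_a ρ hρ f hmeas hpos hrv finv hfinv t ht,
    goal_b ρ hρ f hmeas hpos hrv finv hfinv,
    goal_c ρ hρ f hmeas hpos hrv finv hfinv⟩

end
end
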